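/- arXiv:1307.4829 — 3 statements merged into one kernel-verified Lean document; each statement's English description precedes it below -/
import Mathlib

section
/- Let s > 0 and define I^s f(z) = (1/Γ(s)) ∫₀¹ t^{n-1}(1-t)^{s-1} f(tz) dt for entire f. Then for the Fock kernel K(z,w) = e^{z·w̄} one has I^s K(·,z)(z) = (1/Γ(s)) ∫₀¹ t^{n-1}(1-t)^{s-1} e^{t|z|²} dt, and this quantity is comparable to (1+|z|)^{-2s} e^{|z|²} uniformly in z ∈ ℂⁿ; i.e., there exist c, C > 0 with c(1+|z|)^{-2s} e^{|z|²} ≤ (1/Γ(s)) ∫₀¹ t^{n-1}(1-t)^{s-1} e^{t|z|²} dt ≤ C(1+|z|)^{-2s} e^{|z|²} for all z ∈ ℂⁿ. -/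
open MeasureTheory Set intervalIntegral

namespace Stmt6Aux

lemma intble (s : ℝ) (hs : 0 < s) {g : ℝ → ℝ} (hg : Continuous g) (a b : ℝ) :
    IntervalIntegrable (fun u => u ^ (s-1) * g u) volume a b :=
  (intervalIntegrable_rpow' (by linarith)).mul_continuousOn hg.continuousOn

lemma intble' (s : ℝ) (hs : 0 < s) (p : ℕ) (r : ℝ) (a b : ℝ) :
    IntervalIntegrable (fun u => u ^ (s-1) * ((1-u)^p * Real.exp (-(r*u)))) volume a b :=
  intble s hs (by continuity) a b

noncomputable def H (p : ℕ) (s r : ℝ) : ℝ :=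
  ∫ u in (0:ℝ)..1, u^(s-1) * ((1-u)^p * Real.exp (-(r*u)))

lemma int_rpow_eval (s : ℝ) (hs : 0 < s) (b : ℝ) :
    ∫ u in (0:ℝ)..b, u ^ (s-1) = b ^ s / s := by
  rw [integral_rpow (Or.inl (by linarith))]
  rw [Real.zero_rpow (by linarith), sub_add_cancel]
  ring

lemma H_lower (p : ℕ) (s r : ℝ) (hs : 0 < s) (hr : 0 ≤ r) :
    ((1:ℝ)/2)^p * Real.exp (-(1/2)) * ((2*(1+r)) ^ (-s)) / s ≤ H p s r := by
  set b : ℝ := (2*(1+r))⁻¹ with hbdef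
  have hb0 : 0 < b := by positivity
  have hb2 : b ≤ 1/2 := by
    rw [hbdef]
    rw [inv_le_comm₀ (by positivity) (by norm_num)]
    norm_num; linarith
  have hb1 : b ≤ 1 := by linarith
  set K : ℝ := ((1:ℝ)/2)^p * Real.exp (-(1/2)) with hK
  have hK0 : 0 < K := by positivity
  have hsplit : H p s r = (∫ u in (0:ℝ)..b, u^(s-1) * ((1-u)^p * Real.exp (-(r*u))))
      + ∫ u in b..1, u^(s-1) * ((1-u)^p * Real.exp (-(r*u))) :=
    (integral_add_adjacent_intervals (intble' s hs p r 0 b) (intble' s hs p r b 1)).symm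
  have h2 : 0 ≤ ∫ u in b..1, u^(s-1) * ((1-u)^p * Real.exp (-(r*u))) := by
    apply integral_nonneg hb1
    intro u hu
    have h1u : 0 ≤ 1 - u := by linarith [hu.2]
    have h0u : 0 ≤ u := le_trans hb0.le hu.1
    positivity
  have h1 : K * (b ^ s / s) ≤ ∫ u in (0:ℝ)..b, u^(s-1) * ((1-u)^p * Real.exp (-(r*u))) := by
    have hmono : (∫ u in (0:ℝ)..b, u^(s-1) * K) ≤
        ∫ u in (0:ℝ)..b, u^(s-1) * ((1-u)^p * Real.exp (-(r*u))) := by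
      apply integral_mono_on hb0.le
        ((intervalIntegrable_rpow' (by linarith)).mul_const K) (intble' s hs p r 0 b)
      intro u hu
      have h0u : 0 ≤ u := hu.1
      have hub : u ≤ b := hu.2
      have hru : r * u ≤ 1/2 := by
        calc r * u ≤ r * b := by nlinarith
        _ ≤ 1/2 := by
          rw [hbdef, ← div_eq_mul_inv, div_le_iff₀ (by positivity)]
          linarith
      have hKle : K ≤ (1-u)^p * Real.exp (-(r*u)) := by
        apply mul_le_mul
        · apply pow_le_pow_left₀ (by norm_num); linarith
        · exact Real.exp_le_exp.2 (by linarith)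
        · positivity
        · have : (0:ℝ) ≤ 1 - u := by linarith
          positivity
      exact mul_le_mul_of_nonneg_left hKle (Real.rpow_nonneg h0u _)
    calc K * (b ^ s / s) = (∫ u in (0:ℝ)..b, u^(s-1)) * K := by
          rw [int_rpow_eval s hs b]; ring
      _ = ∫ u in (0:ℝ)..b, u^(s-1) * K := (intervalIntegral.integral_mul_const K _).symm
      _ ≤ _ := hmono
  have hbs : b ^ s = (2*(1+r)) ^ (-s) := by
    rw [hbdef, Real.inv_rpow (by positivity), ← Real.rpow_neg (by positivity)]
  have heq : K * ((2*(1+r)) ^ (-s)) / s = K * (b ^ s / s) := by rw [hbs]; ring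
  rw [hK] at heq; rw [heq, hsplit]
  rw [hK] at h1
  linarith

lemma H_upper (p : ℕ) (s r : ℝ) (hs : 0 < s) (hr : 0 ≤ r) :
    H p s r ≤ 2^s * (Real.Gamma s + 1/s) * (1+r) ^ (-s) := by
  have hG : 0 < Real.Gamma s := Real.Gamma_pos_of_pos hs
  have hH1 : H p s r ≤ ∫ u in (0:ℝ)..1, u^(s-1) * Real.exp (-(r*u)) := by
    apply integral_mono_on zero_le_one (intble' s hs p r 0 1)
      (intble s hs (by continuity) 0 1)
    intro u hu
    apply mul_le_mul_of_nonneg_left ?_ (Real.rpow_nonneg hu.1 _)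
    have h1 : (1-u)^p ≤ 1 := pow_le_one₀ (by linarith [hu.2]) (by linarith [hu.1])
    nlinarith [Real.exp_pos (-(r*u))]
  rcases le_total r 1 with hr1 | hr1
  · have h2 : (∫ u in (0:ℝ)..1, u^(s-1) * Real.exp (-(r*u)))
        ≤ ∫ u in (0:ℝ)..1, u^(s-1) * 1 := by
      apply integral_mono_on zero_le_one (intble s hs (by continuity) 0 1)
        (intble s hs continuous_const 0 1)
      intro u hu
      apply mul_le_mul_of_nonneg_left ?_ (Real.rpow_nonneg hu.1 _)
      exact Real.exp_le_one_iff.2 (by nlinarith [hu.1])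
    have h3 : (∫ u in (0:ℝ)..1, u^(s-1) * 1) = 1/s := by
      simp only [mul_one]
      rw [int_rpow_eval s hs 1, Real.one_rpow]
    have h4 : (2:ℝ)^(-s) ≤ (1+r)^(-s) := by
      rw [Real.rpow_neg (by norm_num), Real.rpow_neg (by linarith)]
      exact inv_anti₀ (Real.rpow_pos_of_pos (by linarith) s)
        (Real.rpow_le_rpow (by linarith) (by linarith) hs.le)
    have h5 : H p s r ≤ 1/s := by rw [← h3]; exact hH1.trans h2
    have h6 : (1:ℝ)/s = 2^s * (1/s) * (2:ℝ)^(-s) := by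
      rw [Real.rpow_neg (by norm_num : (0:ℝ) ≤ 2)]
      have : (2:ℝ)^s ≠ 0 := (Real.rpow_pos_of_pos two_pos s).ne'
      field_simp
    calc H p s r ≤ 1/s := h5
      _ = 2^s * (1/s) * (2:ℝ)^(-s) := h6
      _ ≤ 2^s * (Real.Gamma s + 1/s) * (1+r)^(-s) := by
        apply mul_le_mul ?_ h4 (by positivity) (by positivity)
        apply mul_le_mul_of_nonneg_left (by linarith) (by positivity)
  · have hr0 : 0 < r := lt_of_lt_of_le one_pos hr1
    have hIoi : IntegrableOn (fun u : ℝ => u^(s-1) * Real.exp (-(r*u))) (Ioi 0) := by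
      apply Integrable.mono' (Real.GammaIntegral_convergent hs)
      · apply ContinuousOn.aestronglyMeasurable ?_ measurableSet_Ioi
        exact (continuousOn_id.rpow_const (fun x hx => Or.inl (ne_of_gt hx))).mul
          (Continuous.continuousOn (by continuity))
      · rw [ae_restrict_iff' measurableSet_Ioi]
        filter_upwards with u hu
        have hu0 : 0 < u := hu
        rw [Real.norm_eq_abs, abs_of_nonneg (by positivity)]
        rw [mul_comm (Real.exp (-u))]
        apply mul_le_mul_of_nonneg_left ?_ (Real.rpow_nonneg hu0.le _)
        exact Real.exp_le_exp.2 (by nlinarith)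
    have hIeq := Real.integral_rpow_mul_exp_neg_mul_Ioi hs hr0
    have h5 : (∫ u in (0:ℝ)..1, u^(s-1) * Real.exp (-(r*u)))
        ≤ (1/r)^s * Real.Gamma s := by
      rw [integral_of_le zero_le_one, ← hIeq]
      apply setIntegral_mono_set hIoi ?_ (Ioc_subset_Ioi_self.eventuallyLE)
      filter_upwards [ae_restrict_mem measurableSet_Ioi] with u hu
      have hu0 : 0 < u := hu
      simp only [Pi.zero_apply]
      positivity
    have h6 : ((1:ℝ)/r)^s ≤ 2^s * (1+r)^(-s) := by
      have hd : (1:ℝ)/r ≤ 2/(1+r) := by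
        rw [div_le_div_iff₀ hr0 (by linarith)]; linarith
      calc ((1:ℝ)/r)^s ≤ (2/(1+r))^s := Real.rpow_le_rpow (by positivity) hd hs.le
        _ = 2^s * (1+r)^(-s) := by
          rw [Real.div_rpow (by norm_num) (by linarith), Real.rpow_neg (by linarith),
            div_eq_mul_inv]
    have hA : (0:ℝ) ≤ (1+r)^(-s) := Real.rpow_nonneg (by linarith) _
    have hfin : (1/r)^s * Real.Gamma s ≤ 2^s * (Real.Gamma s + 1/s) * (1+r)^(-s) := by
      calc (1/r)^s * Real.Gamma s ≤ (2^s * (1+r)^(-s)) * Real.Gamma s :=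
            mul_le_mul_of_nonneg_right h6 hG.le
        _ = 2^s * Real.Gamma s * (1+r)^(-s) := by ring
        _ ≤ 2^s * (Real.Gamma s + 1/s) * (1+r)^(-s) := by
            apply mul_le_mul_of_nonneg_right ?_ hA
            apply mul_le_mul_of_nonneg_left ?_ (by positivity)
            have : 0 < 1/s := by positivity
            linarith
    linarith [hH1]

lemma J_eq (p : ℕ) (s r : ℝ) :
    (∫ t in (0:ℝ)..1, t^p * (1-t)^(s-1) * Real.exp (t*r)) = Real.exp r * H p s r := by
  have h1 : (fun t : ℝ => t^p * (1-t)^(s-1) * Real.exp (t*r))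
      = fun t : ℝ => (fun u : ℝ => (1-u)^p * u^(s-1) * Real.exp ((1-u)*r)) (1 - t) := by
    funext t; simp only [sub_sub_cancel]
  rw [h1, integral_comp_sub_left (fun u : ℝ => (1-u)^p * u^(s-1) * Real.exp ((1-u)*r)) 1]
  norm_num
  rw [H, ← intervalIntegral.integral_const_mul]
  apply integral_congr
  intro u _
  simp only
  rw [show (1-u)*r = r + -(r*u) by ring, Real.exp_add]
  ring

lemma inv_le_mul_inv {A B C : ℝ} (hA : 0 < A) (hB : 0 < B) (h : A ≤ C * B) :
    B⁻¹ ≤ C * A⁻¹ := by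
  have hC : 0 < C := by nlinarith
  rw [show C * A⁻¹ = (A / C)⁻¹ by field_simp]
  apply inv_anti₀ (by positivity)
  rw [div_le_iff₀ hC]
  nlinarith

lemma cmp (s m : ℝ) (hs : 0 < s) (hm : 0 ≤ m) :
    (1+m) ^ (-(2*s)) ≤ (1+m^2) ^ (-s) ∧ (1+m^2) ^ (-s) ≤ 2^s * (1+m) ^ (-(2*s)) := by
  have h1m : (0:ℝ) < 1+m := by linarith
  have h1m2 : (0:ℝ) < 1+m^2 := by positivity
  have key : (1+m) ^ (-(2*s)) = (((1+m)^2) ^ s)⁻¹ := by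
    rw [Real.rpow_neg h1m.le, Real.rpow_mul h1m.le, Real.rpow_two]
  have hAB : (1+m^2) ≤ (1+m)^2 := by nlinarith
  have hBA : (1+m)^2 ≤ 2*(1+m^2) := by nlinarith [sq_nonneg (1-m)]
  have hp1 : (0:ℝ) < ((1+m)^2) ^ s := Real.rpow_pos_of_pos (by positivity) s
  have hp2 : (0:ℝ) < (1+m^2) ^ s := Real.rpow_pos_of_pos h1m2 s
  constructor
  · rw [key, Real.rpow_neg h1m2.le]
    exact inv_anti₀ hp2 (Real.rpow_le_rpow h1m2.le hAB hs.le)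
  · rw [key, Real.rpow_neg h1m2.le]
    apply inv_le_mul_inv hp1 hp2
    calc ((1+m)^2) ^ s ≤ (2*(1+m^2)) ^ s :=
          Real.rpow_le_rpow (by positivity) hBA hs.le
      _ = 2^s * (1+m^2)^s := Real.mul_rpow (by norm_num) h1m2.le

lemma key_real (p : ℕ) (s : ℝ) (hs : 0 < s) :
    ∃ c > 0, ∃ C > 0, ∀ m : ℝ, 0 ≤ m →
      c * (1+m)^(-(2*s)) * Real.exp (m^2) ≤
        (1/Real.Gamma s) * ∫ t in (0:ℝ)..1, t^p * (1-t)^(s-1) * Real.exp (t*m^2) ∧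
      (1/Real.Gamma s) * (∫ t in (0:ℝ)..1, t^p * (1-t)^(s-1) * Real.exp (t*m^2)) ≤
        C * (1+m)^(-(2*s)) * Real.exp (m^2) := by
  have hG : 0 < Real.Gamma s := Real.Gamma_pos_of_pos hs
  refine ⟨((1/2)^p * Real.exp (-(1/2)) * 2^(-s) / s) / Real.Gamma s, by positivity,
    (2^s * (Real.Gamma s + 1/s) * 2^s) / Real.Gamma s, by positivity, ?_⟩
  intro m hm
  set r := m^2 with hrdef
  have hr : 0 ≤ r := by positivity
  have hJ := J_eq p s r
  obtain ⟨hc1, hc2⟩ := cmp s m hs hm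
  have hlow := H_lower p s r hs hr
  have hup := H_upper p s r hs hr
  have hexp0 : (0:ℝ) < Real.exp r := Real.exp_pos r
  have hsplitpow : (2*(1+r))^(-s) = 2^(-s) * (1+r)^(-s) :=
    Real.mul_rpow (by norm_num) (by linarith)
  have ha : (0:ℝ) ≤ (1+m)^(-(2*s)) := Real.rpow_nonneg (by linarith) _
  constructor
  · rw [hJ]
    have hH : ((1/2:ℝ))^p * Real.exp (-(1/2)) * 2^(-s) / s * (1+m)^(-(2*s))
        ≤ H p s r := by
      calc ((1/2:ℝ))^p * Real.exp (-(1/2)) * 2^(-s) / s * (1+m)^(-(2*s))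
          ≤ ((1/2:ℝ))^p * Real.exp (-(1/2)) * 2^(-s) / s * (1+r)^(-s) := by
            apply mul_le_mul_of_nonneg_left hc1 (by positivity)
        _ = ((1/2:ℝ))^p * Real.exp (-(1/2)) * ((2*(1+r))^(-s)) / s := by
            rw [hsplitpow]; ring
        _ ≤ H p s r := hlow
    calc ((1/2:ℝ))^p * Real.exp (-(1/2)) * 2^(-s) / s / Real.Gamma s
          * (1+m)^(-(2*s)) * Real.exp r
        = (1/Real.Gamma s) * (Real.exp r *
            (((1/2:ℝ))^p * Real.exp (-(1/2)) * 2^(-s) / s * (1+m)^(-(2*s)))) := by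
          ring
      _ ≤ (1/Real.Gamma s) * (Real.exp r * H p s r) := by
          apply mul_le_mul_of_nonneg_left ?_ (by positivity)
          exact mul_le_mul_of_nonneg_left hH hexp0.le
  · rw [hJ]
    have hH : H p s r ≤ 2^s * (Real.Gamma s + 1/s) * 2^s * (1+m)^(-(2*s)) := by
      calc H p s r ≤ 2^s * (Real.Gamma s + 1/s) * (1+r)^(-s) := hup
        _ ≤ 2^s * (Real.Gamma s + 1/s) * (2^s * (1+m)^(-(2*s))) := by
            apply mul_le_mul_of_nonneg_left hc2 (by positivity)
        _ = 2^s * (Real.Gamma s + 1/s) * 2^s * (1+m)^(-(2*s)) := by ring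
    calc (1/Real.Gamma s) * (Real.exp r * H p s r)
        ≤ (1/Real.Gamma s) * (Real.exp r *
            (2^s * (Real.Gamma s + 1/s) * 2^s * (1+m)^(-(2*s)))) := by
          apply mul_le_mul_of_nonneg_left ?_ (by positivity)
          exact mul_le_mul_of_nonneg_left hH hexp0.le
      _ = 2^s * (Real.Gamma s + 1/s) * 2^s / Real.Gamma s
            * (1+m)^(-(2*s)) * Real.exp r := by ring

end Stmt6Aux

theorem stmt_6 (n : ℕ) (hn : 1 ≤ n) (s : ℝ) (hs : 0 < s) :
    (∀ (z : EuclideanSpace ℂ (Fin n)) (t : ℝ),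
        Complex.exp (inner ℂ z ((t : ℝ) • z) : ℂ) = Real.exp (t * ‖z‖^2)) ∧
    ∃ c > 0, ∃ C > 0, ∀ z : EuclideanSpace ℂ (Fin n),
      c * (1 + ‖z‖) ^ (-(2*s)) * Real.exp (‖z‖^2) ≤
        (1 / Real.Gamma s) *
          ∫ t in (0:ℝ)..1, t^(n-1) * (1-t) ^ (s-1) * Real.exp (t * ‖z‖^2) ∧
      (1 / Real.Gamma s) *
          (∫ t in (0:ℝ)..1, t^(n-1) * (1-t) ^ (s-1) * Real.exp (t * ‖z‖^2)) ≤
        C * (1 + ‖z‖) ^ (-(2*s)) * Real.exp (‖z‖^2) := by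
  constructor
  · intro z t
    have h1 : (inner ℂ z ((t : ℝ) • z) : ℂ) = (t : ℂ) * (‖z‖^2 : ℝ) := by
      have hsm : ((t : ℝ) • z) = ((t : ℂ) • z) := by simp [Complex.coe_smul]
      rw [hsm, inner_smul_right (𝕜 := ℂ), inner_self_eq_norm_sq_to_K]
      simp [Complex.coe_algebraMap, RCLike.ofReal_alg]
    rw [h1]
    rw [show ((t:ℂ) * (‖z‖^2 : ℝ)) = ((t * ‖z‖^2 : ℝ) : ℂ) by push_cast; ring]
    exact Complex.ofReal_exp _ ▸ rfl
  · obtain ⟨c, hc, C, hC, hmain⟩ := Stmt6Aux.key_real (n-1) s hs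
    exact ⟨c, hc, C, hC, fun z => hmain ‖z‖ (norm_nonneg z)⟩
end

section
/- Let α ∈ ℝ and let K^α(z,z) denote the diagonal of the reproducing kernel of the weighted Fock space F²_α. Then K^α(z,z) ≈ (1+|z|)^α e^{|z|²} uniformly in z ∈ ℂⁿ, i.e., there exist constants c, C > 0 with c(1+|z|)^α e^{|z|²} ≤ K^α(z,z) ≤ C(1+|z|)^α e^{|z|²}. -/
open MeasureTheory



namespace FockAux
open Finset Real

lemma exp_tsum (t : ℝ) : ∑' k : ℕ, t ^ k / k.factorial = Real.exp t := by
  rw [Real.exp_eq_exp_ℝ, NormedSpace.exp_eq_tsum_div]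

lemma summableS (t : ℝ) : Summable (fun k : ℕ => t ^ k / k.factorial) :=
  Real.summable_pow_div_factorial t

lemma S_nonneg {t : ℝ} (ht : 0 ≤ t) (k : ℕ) : 0 ≤ t ^ k / k.factorial := by positivity

lemma S_le_exp {t : ℝ} (ht : 0 ≤ t) (k : ℕ) : t ^ k / k.factorial ≤ Real.exp t := by
  rw [← exp_tsum]
  exact Summable.le_tsum (summableS t) k (fun j _ => S_nonneg ht j)

lemma one_add_le_two_pow (k : ℕ) : (1 + k : ℝ) ≤ 2 ^ k := by
  have := Nat.lt_two_pow_self (n := k)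
  have : (k : ℝ) + 1 ≤ 2 ^ k := by exact_mod_cast this
  linarith

lemma summable_pow_w (m : ℕ) {t : ℝ} (ht : 0 ≤ t) :
    Summable fun k : ℕ => (1 + k : ℝ) ^ m * t ^ k / k.factorial := by
  refine Summable.of_nonneg_of_le (fun k => by positivity) (fun k => ?_)
    (Real.summable_pow_div_factorial ((2:ℝ) ^ m * t))
  have h1 : (1 + k : ℝ) ^ m * t ^ k ≤ ((2:ℝ) ^ m * t) ^ k := by
    rw [mul_pow]
    refine mul_le_mul_of_nonneg_right ?_ (by positivity)
    calc (1 + k : ℝ) ^ m ≤ ((2:ℝ) ^ k) ^ m :=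
          pow_le_pow_left₀ (by positivity) (one_add_le_two_pow k) m
      _ = ((2:ℝ) ^ m) ^ k := by rw [← pow_mul, ← pow_mul, Nat.mul_comm]
  exact div_le_div_of_nonneg_right h1 (by positivity) |>.trans_eq rfl

lemma rpow_w_le_pow (β : ℝ) (k : ℕ) :
    (1 + k : ℝ) ^ β ≤ (1 + k : ℝ) ^ (⌈max β 0⌉₊ : ℕ) := by
  have h1 : (1 : ℝ) ≤ 1 + k := le_add_of_nonneg_right (Nat.cast_nonneg k)
  rw [← Real.rpow_natCast (1 + k : ℝ) ⌈max β 0⌉₊]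
  exact Real.rpow_le_rpow_of_exponent_le h1 ((le_max_left β 0).trans (Nat.le_ceil _))

lemma summable_rpow_w (β : ℝ) {t : ℝ} (ht : 0 ≤ t) :
    Summable fun k : ℕ => (1 + k : ℝ) ^ β * t ^ k / k.factorial := by
  refine Summable.of_nonneg_of_le (fun k => by positivity) (fun k => ?_)
    (summable_pow_w ⌈max β 0⌉₊ ht)
  have h1 : (0:ℝ) ≤ t ^ k / k.factorial := S_nonneg ht k
  have := rpow_w_le_pow β k
  calc (1 + k : ℝ) ^ β * t ^ k / k.factorial
      = (1 + k : ℝ) ^ β * (t ^ k / k.factorial) := by ring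
    _ ≤ (1 + k : ℝ) ^ (⌈max β 0⌉₊:ℕ) * (t ^ k / k.factorial) :=
        mul_le_mul_of_nonneg_right this h1
    _ = (1 + k : ℝ) ^ (⌈max β 0⌉₊:ℕ) * t ^ k / k.factorial := by ring

/-- descent: for `2t ≤ K`, terms of the exponential series decay geometrically past `K`. -/
lemma S_descent {t : ℝ} (ht : 0 ≤ t) {K : ℕ} (hK : 2 * t ≤ K) (j : ℕ) :
    t ^ (K + j) / (K + j).factorial ≤ (1/2) ^ j * (t ^ K / K.factorial) := by
  induction j with
  | zero => simp
  | succ j ih =>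
      have hfac : ((K + j + 1 : ℕ) : ℝ) = (K : ℝ) + j + 1 := by push_cast; ring
      have hpos : (0:ℝ) < (K + j + 1 : ℕ) := by positivity
      have key : t ^ (K + (j+1)) / (K + (j+1)).factorial
          = (t / (K + j + 1 : ℕ)) * (t ^ (K + j) / (K + j).factorial) := by
        have : K + (j+1) = (K + j) + 1 := by ring
        rw [this, pow_succ, Nat.factorial_succ]
        push_cast
        field_simp
      have hhalf : t / (K + j + 1 : ℕ) ≤ 1 / 2 := by
        rw [div_le_div_iff₀ hpos (by norm_num)]
        rw [hfac]
        nlinarith [hK, Nat.cast_nonneg (α := ℝ) j]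
      calc t ^ (K + (j+1)) / (K + (j+1)).factorial
          = (t / (K + j + 1 : ℕ)) * (t ^ (K + j) / (K + j).factorial) := key
        _ ≤ (1/2) * ((1/2) ^ j * (t ^ K / K.factorial)) := by
            apply mul_le_mul hhalf ih (by positivity)
            norm_num
        _ = (1/2) ^ (j+1) * (t ^ K / K.factorial) := by ring

/-- Chernoff bound for a single term. -/
lemma S_single_chernoff {t : ℝ} (ht : 0 ≤ t) {θ : ℝ} (hθ : 0 < θ) (K : ℕ) :
    t ^ K / K.factorial ≤ θ⁻¹ ^ K * Real.exp (θ * t) := by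
  have h := S_le_exp (t := θ * t) (by positivity) K
  have hpow : (θ * t) ^ K = θ ^ K * t ^ K := mul_pow θ t K
  rw [hpow] at h
  have h2 : θ ^ K * t ^ K / K.factorial ≤ Real.exp (θ * t) := h
  have h3 : t ^ K / K.factorial ≤ θ⁻¹ ^ K * (θ ^ K * t ^ K / K.factorial) := by
    have : θ⁻¹ ^ K * (θ ^ K * t ^ K / K.factorial)
        = (θ⁻¹ * θ) ^ K * t ^ K / K.factorial := by rw [mul_pow]; ring
    rw [this, inv_mul_cancel₀ (ne_of_gt hθ), one_pow, one_mul]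
  calc t ^ K / K.factorial ≤ θ⁻¹ ^ K * (θ ^ K * t ^ K / K.factorial) := h3
    _ ≤ θ⁻¹ ^ K * Real.exp (θ * t) := by
        apply mul_le_mul_of_nonneg_left h2 (by positivity)

/-- head bound. -/
lemma S_head_le {t : ℝ} (ht : 0 ≤ t) (K : ℕ) :
    ∑ k ∈ range K, t ^ k / k.factorial ≤ 2 ^ K * Real.exp (t / 2) := by
  have h1 : ∀ k ∈ range K, t ^ k / k.factorial ≤ 2 ^ K * ((t/2) ^ k / k.factorial) := by
    intro k hk
    have hkK : k ≤ K := le_of_lt (mem_range.mp hk)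
    have : t ^ k = 2 ^ k * (t/2) ^ k := by
      rw [← mul_pow]; ring_nf
    rw [this]
    have h2k : (2:ℝ) ^ k ≤ 2 ^ K := pow_le_pow_right₀ (by norm_num) hkK
    calc (2:ℝ) ^ k * (t/2) ^ k / k.factorial
        = 2 ^ k * ((t/2) ^ k / k.factorial) := by ring
      _ ≤ 2 ^ K * ((t/2) ^ k / k.factorial) :=
          mul_le_mul_of_nonneg_right h2k (by positivity)
  calc ∑ k ∈ range K, t ^ k / k.factorial
      ≤ ∑ k ∈ range K, 2 ^ K * ((t/2) ^ k / k.factorial) := sum_le_sum h1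
    _ = 2 ^ K * ∑ k ∈ range K, (t/2) ^ k / k.factorial := by rw [mul_sum]
    _ ≤ 2 ^ K * Real.exp (t/2) := by
        apply mul_le_mul_of_nonneg_left _ (by positivity)
        rw [← exp_tsum (t/2)]
        exact Summable.sum_le_tsum (range K) (fun k _ => S_nonneg (by positivity) k)
          (summableS (t/2))

/-- tail bound (geometric). -/
lemma S_tail_le {t : ℝ} (ht : 0 ≤ t) {K : ℕ} (hK : 2 * t ≤ K) :
    ∑' j : ℕ, t ^ (j + K) / (j + K).factorial ≤ 2 * (t ^ K / K.factorial) := by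
  have hsum : Summable fun j : ℕ => t ^ (j + K) / (j + K).factorial :=
    (summable_nat_add_iff K).mpr (summableS t)
  have hle : ∀ j : ℕ, t ^ (j + K) / (j + K).factorial
      ≤ (1/2:ℝ) ^ j * (t ^ K / K.factorial) := by
    intro j
    have := S_descent ht hK j
    rwa [Nat.add_comm K j] at this
  have hg : Summable fun j : ℕ => (1/2:ℝ) ^ j * (t ^ K / K.factorial) :=
    (summable_geometric_of_lt_one (by norm_num) (by norm_num)).mul_right _
  calc ∑' j : ℕ, t ^ (j + K) / (j + K).factorial
      ≤ ∑' j : ℕ, (1/2:ℝ) ^ j * (t ^ K / K.factorial) := Summable.tsum_le_tsum hle hsum hg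
    _ = (∑' j : ℕ, (1/2:ℝ) ^ j) * (t ^ K / K.factorial) := tsum_mul_right
    _ = 2 * (t ^ K / K.factorial) := by
        rw [tsum_geometric_of_lt_one (by norm_num) (by norm_num)]
        norm_num

end FockAux

namespace FockAux
open Finset Real

lemma one_le_one_add (k : ℕ) : (1:ℝ) ≤ 1 + k := le_add_of_nonneg_right (Nat.cast_nonneg k)

lemma log_two_le : Real.log 2 ≤ 3/4 := by
  have := Real.log_two_lt_d9; linarith

lemma le_log_two : (11/16 : ℝ) ≤ Real.log 2 := by
  have := Real.log_two_gt_d9; linarith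

lemma four_le_exp : (4:ℝ) ≤ Real.exp (3/2) := by
  have h4 : (4:ℝ) = Real.exp (Real.log 4) := (Real.exp_log (by norm_num)).symm
  rw [h4]
  apply Real.exp_le_exp.mpr
  have : Real.log 4 = 2 * Real.log 2 := by
    rw [show (4:ℝ) = 2^2 by norm_num, Real.log_pow]; push_cast; ring
  rw [this]; linarith [log_two_le]

lemma two_pow_nat_eq (K : ℕ) : (2:ℝ) ^ K = Real.exp (K * Real.log 2) := by
  rw [← Real.rpow_natCast 2 K, Real.rpow_def_of_pos (by norm_num)]
  ring_nf

/-- refined head bound with `K = ⌈t/2⌉₊`. -/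
lemma S_head_refined {t : ℝ} (ht : 0 ≤ t) :
    ∑ k ∈ range ⌈t/2⌉₊, t ^ k / k.factorial ≤ 2 * Real.exp (7 * t / 8) := by
  set K := ⌈t/2⌉₊ with hK
  have hKle : (K:ℝ) ≤ t/2 + 1 := le_of_lt (Nat.ceil_lt_add_one (by positivity))
  have h1 : (2:ℝ) ^ K ≤ 2 * Real.exp (t * Real.log 2 / 2) := by
    rw [two_pow_nat_eq]
    have : (K:ℝ) * Real.log 2 ≤ (t/2 + 1) * Real.log 2 :=
      mul_le_mul_of_nonneg_right hKle (Real.log_nonneg (by norm_num))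
    calc Real.exp (K * Real.log 2) ≤ Real.exp ((t/2+1) * Real.log 2) :=
          Real.exp_le_exp.mpr this
      _ = Real.exp (Real.log 2) * Real.exp (t * Real.log 2 / 2) := by
          rw [← Real.exp_add]; ring_nf
      _ = 2 * Real.exp (t * Real.log 2 / 2) := by rw [Real.exp_log (by norm_num)]
  calc ∑ k ∈ range K, t ^ k / k.factorial ≤ 2 ^ K * Real.exp (t/2) := S_head_le ht K
    _ ≤ 2 * Real.exp (t * Real.log 2 / 2) * Real.exp (t/2) :=
        mul_le_mul_of_nonneg_right h1 (Real.exp_nonneg _)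
    _ = 2 * Real.exp (t * Real.log 2 / 2 + t/2) := by rw [mul_assoc, ← Real.exp_add]
    _ ≤ 2 * Real.exp (7 * t / 8) := by
        have hl := log_two_le
        have : t * Real.log 2 / 2 + t/2 ≤ 7 * t / 8 := by nlinarith [ht]
        have := Real.exp_le_exp.mpr this
        linarith

lemma summable_Cm (m : ℕ) : Summable fun j : ℕ => (1+j:ℝ)^m * (1/2:ℝ)^j := by
  have S1 : Summable fun j : ℕ => (j:ℝ)^m * (1/2:ℝ)^j :=
    summable_pow_mul_geometric_of_norm_lt_one m (by rw [Real.norm_eq_abs]; rw [abs_of_pos] <;> norm_num)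
  refine Summable.of_nonneg_of_le (fun j => by positivity) (fun j => ?_)
    ((S1.mul_left ((2:ℝ)^m)).add (summable_geometric_of_lt_one (r := (1/2:ℝ)) (by norm_num) (by norm_num)))
  have hb : (1+j:ℝ)^m ≤ 2^m * (j:ℝ)^m + 1 := by
    rcases Nat.eq_zero_or_pos j with h | h
    · subst h; simp
    · have hj1 : (1:ℝ) ≤ j := by exact_mod_cast h
      have : (1+j:ℝ) ≤ 2*j := by linarith
      calc (1+j:ℝ)^m ≤ (2*(j:ℝ))^m := pow_le_pow_left₀ (by positivity) this m
        _ = 2^m * (j:ℝ)^m := by rw [mul_pow]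
        _ ≤ 2^m * (j:ℝ)^m + 1 := by linarith
  calc (1+j:ℝ)^m * (1/2:ℝ)^j ≤ (2^m * (j:ℝ)^m + 1) * (1/2:ℝ)^j :=
        mul_le_mul_of_nonneg_right hb (by positivity)
    _ = 2^m * ((j:ℝ)^m * (1/2:ℝ)^j) + (1/2:ℝ)^j := by ring

set_option maxHeartbeats 2000000 in
lemma master_upper_pos {β : ℝ} (hβ : 0 ≤ β) :
    ∃ C > 0, ∀ t : ℝ, 0 ≤ t →
      ∑' k : ℕ, (1+k:ℝ)^β * t^k / k.factorial ≤ C * ((1+t)^β * Real.exp t) := by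
  set m := ⌈max β 0⌉₊ with hm
  set Cm := ∑' j : ℕ, (1+j:ℝ)^m * (1/2:ℝ)^j with hCm
  have hCmsum := summable_Cm m
  have hCm0 : 0 ≤ Cm := tsum_nonneg (fun j => by positivity)
  refine ⟨(4:ℝ)^β * (1 + Cm), by positivity, fun t ht => ?_⟩
  set K := ⌈2*t⌉₊ + 1 with hKdef
  have h2K : 2*t ≤ K := by
    have := Nat.le_ceil (2*t)
    push_cast [hKdef]; push_cast at this; linarith
  have hK4 : (1+(K:ℝ)) ≤ 4*(1+t) := by
    have := Nat.ceil_lt_add_one (show (0:ℝ) ≤ 2*t by positivity)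
    push_cast [hKdef]; push_cast at this; linarith
  have hsum := summable_rpow_w β ht
  have hsplit := Summable.sum_add_tsum_nat_add (f := fun k : ℕ => (1+k:ℝ)^β * t^k / k.factorial) K hsum
  have hhead : ∑ k ∈ range K, (1+k:ℝ)^β * t^k / k.factorial
      ≤ (1+(K:ℝ))^β * Real.exp t := by
    have h1 : ∀ k ∈ range K, (1+k:ℝ)^β * t^k / k.factorial
        ≤ (1+(K:ℝ))^β * (t^k / k.factorial) := by
      intro k hk
      have hkK : (k:ℝ) ≤ K := by exact_mod_cast le_of_lt (mem_range.mp hk)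
      have hw : (1+k:ℝ)^β ≤ (1+(K:ℝ))^β :=
        Real.rpow_le_rpow (by positivity) (by linarith) hβ
      calc (1+k:ℝ)^β * t^k / k.factorial = (1+k:ℝ)^β * (t^k / k.factorial) := by ring
        _ ≤ (1+(K:ℝ))^β * (t^k / k.factorial) :=
            mul_le_mul_of_nonneg_right hw (S_nonneg ht k)
    calc ∑ k ∈ range K, (1+k:ℝ)^β * t^k / k.factorial
        ≤ ∑ k ∈ range K, (1+(K:ℝ))^β * (t^k / k.factorial) := sum_le_sum h1
      _ = (1+(K:ℝ))^β * ∑ k ∈ range K, t^k / k.factorial := by rw [mul_sum]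
      _ ≤ (1+(K:ℝ))^β * Real.exp t := by
          apply mul_le_mul_of_nonneg_left _ (by positivity)
          rw [← exp_tsum t]
          exact Summable.sum_le_tsum (range K) (fun k _ => S_nonneg ht k) (summableS t)
  have htail : ∑' j : ℕ, (1+((j+K:ℕ)):ℝ)^β * t^(j+K) / (j+K).factorial
      ≤ (1+(K:ℝ))^β * Real.exp t * Cm := by
    have hterm : ∀ j : ℕ, (1+((j+K:ℕ)):ℝ)^β * t^(j+K) / (j+K).factorial
        ≤ ((1+(K:ℝ))^β * Real.exp t) * ((1+j:ℝ)^m * (1/2:ℝ)^j) := by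
      intro j
      have hw : (1+((j+K:ℕ)):ℝ)^β ≤ (1+(K:ℝ))^β * (1+j:ℝ)^m := by
        have h1 : (1+((j+K:ℕ)):ℝ) ≤ (1+(K:ℝ)) * (1+j:ℝ) := by
          push_cast
          nlinarith [Nat.cast_nonneg (α := ℝ) j, Nat.cast_nonneg (α := ℝ) K]
        calc (1+((j+K:ℕ)):ℝ)^β ≤ ((1+(K:ℝ)) * (1+j:ℝ))^β :=
              Real.rpow_le_rpow (by positivity) h1 hβ
          _ = (1+(K:ℝ))^β * (1+j:ℝ)^β := Real.mul_rpow (by positivity) (by positivity)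
          _ ≤ (1+(K:ℝ))^β * (1+j:ℝ)^m :=
              mul_le_mul_of_nonneg_left (rpow_w_le_pow β j) (by positivity)
      have hS : t^(j+K) / (j+K).factorial ≤ (1/2:ℝ)^j * Real.exp t := by
        have h1 := S_descent ht h2K j
        rw [Nat.add_comm K j] at h1
        calc t^(j+K) / (j+K).factorial ≤ (1/2:ℝ)^j * (t^K / K.factorial) := h1
          _ ≤ (1/2:ℝ)^j * Real.exp t :=
              mul_le_mul_of_nonneg_left (S_le_exp ht K) (by positivity)
      calc (1+((j+K:ℕ)):ℝ)^β * t^(j+K) / (j+K).factorial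
          = (1+((j+K:ℕ)):ℝ)^β * (t^(j+K) / (j+K).factorial) := by ring
        _ ≤ ((1+(K:ℝ))^β * (1+j:ℝ)^m) * ((1/2:ℝ)^j * Real.exp t) := by
            apply mul_le_mul hw hS (by positivity) (by positivity)
        _ = ((1+(K:ℝ))^β * Real.exp t) * ((1+j:ℝ)^m * (1/2:ℝ)^j) := by ring
    have hsumtail : Summable fun j : ℕ => (1+((j+K:ℕ)):ℝ)^β * t^(j+K) / (j+K).factorial :=
      (summable_nat_add_iff K).mpr hsum
    calc ∑' j : ℕ, (1+((j+K:ℕ)):ℝ)^β * t^(j+K) / (j+K).factorial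
        ≤ ∑' j : ℕ, ((1+(K:ℝ))^β * Real.exp t) * ((1+j:ℝ)^m * (1/2:ℝ)^j) :=
          Summable.tsum_le_tsum hterm hsumtail (hCmsum.mul_left _)
      _ = (1+(K:ℝ))^β * Real.exp t * Cm := by rw [tsum_mul_left]
  have hbase : (1+(K:ℝ))^β ≤ 4^β * (1+t)^β := by
    calc (1+(K:ℝ))^β ≤ (4*(1+t))^β := Real.rpow_le_rpow (by positivity) hK4 hβ
      _ = 4^β * (1+t)^β := Real.mul_rpow (by norm_num) (by positivity)
  have hfinal : ∑' k : ℕ, (1+k:ℝ)^β * t^k / k.factorial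
      ≤ (1+(K:ℝ))^β * Real.exp t * (1 + Cm) := by
    rw [← hsplit]
    have := add_le_add hhead htail
    calc (∑ k ∈ range K, (1+k:ℝ)^β * t^k / k.factorial)
          + ∑' j : ℕ, (1+((j+K:ℕ)):ℝ)^β * t^(j+K) / (j+K).factorial
        ≤ (1+(K:ℝ))^β * Real.exp t + (1+(K:ℝ))^β * Real.exp t * Cm := this
      _ = (1+(K:ℝ))^β * Real.exp t * (1 + Cm) := by ring
  calc ∑' k : ℕ, (1+k:ℝ)^β * t^k / k.factorial
      ≤ (1+(K:ℝ))^β * Real.exp t * (1 + Cm) := hfinal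
    _ ≤ (4^β * (1+t)^β) * Real.exp t * (1 + Cm) := by
        apply mul_le_mul_of_nonneg_right _ (by linarith)
        exact mul_le_mul_of_nonneg_right hbase (Real.exp_nonneg t)
    _ = (4:ℝ)^β * (1 + Cm) * ((1+t)^β * Real.exp t) := by ring

end FockAux

namespace FockAux
open Finset Real

lemma term0_le_tsum {β t : ℝ} (ht : 0 ≤ t) :
    (1:ℝ) ≤ ∑' k : ℕ, (1+k:ℝ)^β * t^k / k.factorial := by
  have hsum := summable_rpow_w β ht
  have h := Summable.le_tsum hsum 0 (fun j _ => by positivity)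
  have h0 : (1+(0:ℕ):ℝ)^β * t^(0:ℕ) / (0:ℕ).factorial = 1 := by
    norm_num
  rw [h0] at h; exact h

set_option maxHeartbeats 2000000 in
lemma master_lower_pos {β : ℝ} (hβ : 0 ≤ β) :
    ∃ c > 0, ∀ t : ℝ, 0 ≤ t →
      c * ((1+t)^β * Real.exp t) ≤ ∑' k : ℕ, (1+k:ℝ)^β * t^k / k.factorial := by
  refine ⟨min ((1/2) * ((2:ℝ)^β)⁻¹) (((13:ℝ)^β)⁻¹ * Real.exp (-12)),
    by positivity, fun t ht => ?_⟩
  have hsum := summable_rpow_w β ht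
  rcases le_or_gt t 12 with h12 | h12
  · have h1 : (1+t)^β * Real.exp t ≤ (13:ℝ)^β * Real.exp 12 := by
      apply mul_le_mul _ (Real.exp_le_exp.mpr h12) (Real.exp_nonneg t)
        (Real.rpow_nonneg (by norm_num) β)
      exact Real.rpow_le_rpow (by positivity) (by linarith) hβ
    have h2 : min ((1/2) * ((2:ℝ)^β)⁻¹) (((13:ℝ)^β)⁻¹ * Real.exp (-12))
        * ((1+t)^β * Real.exp t)
        ≤ (((13:ℝ)^β)⁻¹ * Real.exp (-12)) * ((13:ℝ)^β * Real.exp 12) := by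
      apply mul_le_mul (min_le_right _ _) h1 (by positivity) (by positivity)
    have h3 : (((13:ℝ)^β)⁻¹ * Real.exp (-12)) * ((13:ℝ)^β * Real.exp 12) = 1 := by
      have hne : ((13:ℝ)^β) ≠ 0 := ne_of_gt (Real.rpow_pos_of_pos (by norm_num) β)
      rw [Real.exp_neg]
      field_simp
    calc min ((1/2) * ((2:ℝ)^β)⁻¹) (((13:ℝ)^β)⁻¹ * Real.exp (-12)) * ((1+t)^β * Real.exp t)
        ≤ (((13:ℝ)^β)⁻¹ * Real.exp (-12)) * ((13:ℝ)^β * Real.exp 12) := h2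
      _ = 1 := h3
      _ ≤ _ := term0_le_tsum ht
  · set K := ⌈t/2⌉₊ with hKdef
    have hK1 : t/2 ≤ (K:ℝ) := Nat.le_ceil _
    have hhead : ∑ k ∈ range K, t ^ k / k.factorial ≤ 2 * Real.exp (7 * t / 8) :=
      S_head_refined ht
    have hfourexp : (4:ℝ) ≤ Real.exp (t/8) := by
      calc (4:ℝ) ≤ Real.exp (3/2) := four_le_exp
        _ ≤ Real.exp (t/8) := Real.exp_le_exp.mpr (by linarith)
    have hhalf : 2 * Real.exp (7 * t / 8) ≤ Real.exp t / 2 := by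
      have he : Real.exp t = Real.exp (7*t/8) * Real.exp (t/8) := by
        rw [← Real.exp_add]; ring_nf
      rw [he]
      nlinarith [Real.exp_pos (7*t/8), Real.exp_pos (t/8)]
    have hsplitS := Summable.sum_add_tsum_nat_add
      (f := fun k : ℕ => t^k / k.factorial) K (summableS t)
    have htailS : Real.exp t / 2 ≤ ∑' j : ℕ, t^(j+K) / (j+K).factorial := by
      have : ∑' j : ℕ, t^(j+K) / (j+K).factorial
          = Real.exp t - ∑ k ∈ range K, t ^ k / k.factorial := by
        rw [← exp_tsum t]; linarith [hsplitS]
      rw [this]; linarith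
    have htailf : (1+(K:ℝ))^β * ∑' j : ℕ, t^(j+K) / (j+K).factorial
        ≤ ∑' j : ℕ, (1+((j+K:ℕ)):ℝ)^β * t^(j+K) / (j+K).factorial := by
      rw [← tsum_mul_left]
      apply Summable.tsum_le_tsum _ (((summable_nat_add_iff K).mpr (summableS t)).mul_left _)
        ((summable_nat_add_iff K).mpr hsum)
      intro j
      have hw : (1+(K:ℝ))^β ≤ (1+((j+K:ℕ)):ℝ)^β := by
        apply Real.rpow_le_rpow (by positivity) _ hβ
        push_cast; linarith [Nat.cast_nonneg (α := ℝ) j]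
      calc (1+(K:ℝ))^β * (t^(j+K) / (j+K).factorial)
          ≤ (1+((j+K:ℕ)):ℝ)^β * (t^(j+K) / (j+K).factorial) :=
            mul_le_mul_of_nonneg_right hw (S_nonneg ht _)
        _ = (1+((j+K:ℕ)):ℝ)^β * t^(j+K) / (j+K).factorial := by ring
    have htsumge : (1+(K:ℝ))^β * (Real.exp t / 2)
        ≤ ∑' k : ℕ, (1+k:ℝ)^β * t^k / k.factorial := by
      have hsplitf := Summable.sum_add_tsum_nat_add
        (f := fun k : ℕ => (1+k:ℝ)^β * t^k / k.factorial) K hsum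
      have hheadf : 0 ≤ ∑ k ∈ range K, (1+k:ℝ)^β * t^k / k.factorial :=
        sum_nonneg (fun k _ => by positivity)
      have t1 : (1+(K:ℝ))^β * (Real.exp t / 2)
          ≤ (1+(K:ℝ))^β * ∑' j : ℕ, t^(j+K) / (j+K).factorial :=
        mul_le_mul_of_nonneg_left htailS (by positivity)
      linarith [htailf, t1]
    have hKrpow : (1+t)^β * ((2:ℝ)^β)⁻¹ ≤ (1+(K:ℝ))^β := by
      have h0 : (1+t)/2 ≤ 1 + (K:ℝ) := by linarith
      calc (1+t)^β * ((2:ℝ)^β)⁻¹ = ((1+t)/2)^β := by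
            rw [Real.div_rpow (by linarith) (by norm_num)]; ring
        _ ≤ (1+(K:ℝ))^β := Real.rpow_le_rpow (by positivity) h0 hβ
    calc min ((1/2) * ((2:ℝ)^β)⁻¹) (((13:ℝ)^β)⁻¹ * Real.exp (-12)) * ((1+t)^β * Real.exp t)
        ≤ (1/2) * ((2:ℝ)^β)⁻¹ * ((1+t)^β * Real.exp t) := by
          apply mul_le_mul_of_nonneg_right (min_le_left _ _) (by positivity)
      _ = ((1+t)^β * ((2:ℝ)^β)⁻¹) * (Real.exp t / 2) := by ring
      _ ≤ (1+(K:ℝ))^β * (Real.exp t / 2) :=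
          mul_le_mul_of_nonneg_right hKrpow (by positivity)
      _ ≤ _ := htsumge

lemma rpow_le_exp_eighth {γ : ℝ} (hγ : 0 ≤ γ) :
    ∃ C > 0, ∀ t : ℝ, 0 ≤ t → (1+t)^γ ≤ C * Real.exp (t/8) := by
  rcases eq_or_lt_of_le hγ with h0 | h0
  · refine ⟨1, one_pos, fun t ht => ?_⟩
    rw [← h0, Real.rpow_zero, one_mul]
    exact Real.one_le_exp (by positivity)
  · refine ⟨Real.exp (1/8 + γ * Real.log (8*γ)), Real.exp_pos _, fun t ht => ?_⟩
    have h8γ : 0 < 8*γ := by linarith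
    have h1t : 0 < 1+t := by linarith
    have hlog : Real.log (1+t) ≤ (1+t)/(8*γ) + Real.log (8*γ) := by
      have h := Real.log_le_sub_one_of_pos (show 0 < (1+t)/(8*γ) by positivity)
      have hd : Real.log ((1+t)/(8*γ)) = Real.log (1+t) - Real.log (8*γ) :=
        Real.log_div (ne_of_gt h1t) (ne_of_gt h8γ)
      rw [hd] at h; linarith
    have key : Real.log (1+t) * γ ≤ 1/8 + γ * Real.log (8*γ) + t/8 := by
      have h := mul_le_mul_of_nonneg_right hlog hγ
      have hcalc : ((1+t)/(8*γ) + Real.log (8*γ)) * γ = (1+t)/8 + γ * Real.log (8*γ) := by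
        field_simp
      rw [hcalc] at h; linarith
    calc (1+t)^γ = Real.exp (Real.log (1+t) * γ) := Real.rpow_def_of_pos h1t γ
      _ ≤ Real.exp (1/8 + γ * Real.log (8*γ) + t/8) := Real.exp_le_exp.mpr key
      _ = Real.exp (1/8 + γ * Real.log (8*γ)) * Real.exp (t/8) := by rw [← Real.exp_add]

set_option maxHeartbeats 2000000 in
lemma master_upper_neg {β : ℝ} (hβ : β < 0) :
    ∃ C > 0, ∀ t : ℝ, 0 ≤ t →
      ∑' k : ℕ, (1+k:ℝ)^β * t^k / k.factorial ≤ C * ((1+t)^β * Real.exp t) := by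
  obtain ⟨Cγ, hCγ, hC⟩ := rpow_le_exp_eighth (γ := -β) (by linarith)
  refine ⟨2*Cγ + ((2:ℝ)^β)⁻¹, by positivity, fun t ht => ?_⟩
  have hsum := summable_rpow_w β ht
  set K := ⌈t/2⌉₊ with hKdef
  have hK1 : t/2 ≤ (K:ℝ) := Nat.le_ceil _
  have h1t : (0:ℝ) < 1 + t := by linarith
  -- head bound
  have hhead : ∑ k ∈ range K, (1+k:ℝ)^β * t^k / k.factorial
      ≤ 2 * Real.exp (7 * t / 8) := by
    have h1 : ∀ k ∈ range K, (1+k:ℝ)^β * t^k / k.factorial ≤ t^k / k.factorial := by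
      intro k _
      have hw : (1+k:ℝ)^β ≤ 1 :=
        Real.rpow_le_one_of_one_le_of_nonpos (one_le_one_add k) (le_of_lt hβ)
      calc (1+k:ℝ)^β * t^k / k.factorial = (1+k:ℝ)^β * (t^k / k.factorial) := by ring
        _ ≤ 1 * (t^k / k.factorial) := mul_le_mul_of_nonneg_right hw (S_nonneg ht k)
        _ = t^k / k.factorial := one_mul _
    calc ∑ k ∈ range K, (1+k:ℝ)^β * t^k / k.factorial
        ≤ ∑ k ∈ range K, t^k / k.factorial := sum_le_sum h1
      _ ≤ 2 * Real.exp (7 * t / 8) := S_head_refined ht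
  have hone : (1:ℝ) ≤ Cγ * Real.exp (t/8) * (1+t)^β := by
    have hpow : (1+t)^(-β) * (1+t)^β = 1 := by
      rw [← Real.rpow_add h1t]; simp
    have h := mul_le_mul_of_nonneg_right (hC t ht) (Real.rpow_nonneg (le_of_lt h1t) β)
    rw [hpow] at h
    exact h
  have hhead2 : 2 * Real.exp (7 * t / 8) ≤ 2*Cγ * ((1+t)^β * Real.exp t) := by
    have h := mul_le_mul_of_nonneg_right hone (Real.exp_nonneg (7*t/8))
    rw [one_mul] at h
    have he : Real.exp (t/8) * Real.exp (7*t/8) = Real.exp t := by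
      rw [← Real.exp_add]; ring_nf
    calc 2 * Real.exp (7*t/8) ≤ 2 * (Cγ * Real.exp (t/8) * (1+t)^β * Real.exp (7*t/8)) := by
          nlinarith [Real.exp_pos (7*t/8)]
      _ = 2*Cγ * ((1+t)^β * (Real.exp (t/8) * Real.exp (7*t/8))) := by ring
      _ = 2*Cγ * ((1+t)^β * Real.exp t) := by rw [he]
  -- tail bound
  have htail : ∑' j : ℕ, (1+((j+K:ℕ)):ℝ)^β * t^(j+K) / (j+K).factorial
      ≤ ((2:ℝ)^β)⁻¹ * ((1+t)^β * Real.exp t) := by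
    have hKpos : (0:ℝ) < 1 + (K:ℝ) := by positivity
    have hterm : ∀ j : ℕ, (1+((j+K:ℕ)):ℝ)^β * t^(j+K) / (j+K).factorial
        ≤ (1+(K:ℝ))^β * (t^(j+K) / (j+K).factorial) := by
      intro j
      have hw : (1+((j+K:ℕ)):ℝ)^β ≤ (1+(K:ℝ))^β := by
        apply Real.rpow_le_rpow_of_nonpos hKpos _ (le_of_lt hβ)
        push_cast; linarith [Nat.cast_nonneg (α := ℝ) j]
      calc (1+((j+K:ℕ)):ℝ)^β * t^(j+K) / (j+K).factorial
          = (1+((j+K:ℕ)):ℝ)^β * (t^(j+K) / (j+K).factorial) := by ring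
        _ ≤ (1+(K:ℝ))^β * (t^(j+K) / (j+K).factorial) :=
            mul_le_mul_of_nonneg_right hw (S_nonneg ht _)
    have hsumtail : Summable fun j : ℕ => (1+((j+K:ℕ)):ℝ)^β * t^(j+K) / (j+K).factorial :=
      (summable_nat_add_iff K).mpr hsum
    have hStail : ∑' j : ℕ, t^(j+K) / (j+K).factorial ≤ Real.exp t := by
      have hsplitS := Summable.sum_add_tsum_nat_add (f := fun k : ℕ => t^k / k.factorial) K (summableS t)
      have hheadS : 0 ≤ ∑ k ∈ range K, t^k / k.factorial :=
        sum_nonneg (fun k _ => S_nonneg ht k)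
      rw [← exp_tsum t]; linarith
    have hKb : (1+(K:ℝ))^β ≤ ((2:ℝ)^β)⁻¹ * (1+t)^β := by
      have h0 : (1+t)/2 ≤ 1 + (K:ℝ) := by linarith
      calc (1+(K:ℝ))^β ≤ ((1+t)/2)^β :=
            Real.rpow_le_rpow_of_nonpos (by positivity) h0 (le_of_lt hβ)
        _ = ((2:ℝ)^β)⁻¹ * (1+t)^β := by
            rw [Real.div_rpow (by linarith) (by norm_num)]; ring
    calc ∑' j : ℕ, (1+((j+K:ℕ)):ℝ)^β * t^(j+K) / (j+K).factorial
        ≤ ∑' j : ℕ, (1+(K:ℝ))^β * (t^(j+K) / (j+K).factorial) :=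
          Summable.tsum_le_tsum hterm hsumtail
            (((summable_nat_add_iff K).mpr (summableS t)).mul_left _)
      _ = (1+(K:ℝ))^β * ∑' j : ℕ, t^(j+K) / (j+K).factorial := tsum_mul_left
      _ ≤ (1+(K:ℝ))^β * Real.exp t :=
          mul_le_mul_of_nonneg_left hStail (by positivity)
      _ ≤ (((2:ℝ)^β)⁻¹ * (1+t)^β) * Real.exp t :=
          mul_le_mul_of_nonneg_right hKb (Real.exp_nonneg t)
      _ = ((2:ℝ)^β)⁻¹ * ((1+t)^β * Real.exp t) := by ring
  have hsplit := Summable.sum_add_tsum_nat_add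
    (f := fun k : ℕ => (1+k:ℝ)^β * t^k / k.factorial) K hsum
  calc ∑' k : ℕ, (1+k:ℝ)^β * t^k / k.factorial
      = (∑ k ∈ range K, (1+k:ℝ)^β * t^k / k.factorial)
        + ∑' j : ℕ, (1+((j+K:ℕ)):ℝ)^β * t^(j+K) / (j+K).factorial := hsplit.symm
    _ ≤ 2*Cγ * ((1+t)^β * Real.exp t) + ((2:ℝ)^β)⁻¹ * ((1+t)^β * Real.exp t) :=
        add_le_add (hhead.trans hhead2) htail
    _ = (2*Cγ + ((2:ℝ)^β)⁻¹) * ((1+t)^β * Real.exp t) := by ring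

set_option maxHeartbeats 2000000 in
lemma master_lower_neg {β : ℝ} (hβ : β < 0) :
    ∃ c > 0, ∀ t : ℝ, 0 ≤ t →
      c * ((1+t)^β * Real.exp t) ≤ ∑' k : ℕ, (1+k:ℝ)^β * t^k / k.factorial := by
  refine ⟨min ((3:ℝ)^β / 2) (Real.exp (-12)), by positivity, fun t ht => ?_⟩
  have hsum := summable_rpow_w β ht
  have h1t : (0:ℝ) < 1 + t := by linarith
  rcases le_or_gt t 12 with h12 | h12
  · have h1 : (1+t)^β ≤ 1 :=
      Real.rpow_le_one_of_one_le_of_nonpos (by linarith) (le_of_lt hβ)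
    have h2 : min ((3:ℝ)^β / 2) (Real.exp (-12)) * ((1+t)^β * Real.exp t)
        ≤ Real.exp (-12) * (1 * Real.exp 12) := by
      apply mul_le_mul (min_le_right _ _) _ (by positivity) (Real.exp_nonneg _)
      exact mul_le_mul h1 (Real.exp_le_exp.mpr h12) (Real.exp_nonneg t) zero_le_one
    have h3 : Real.exp (-12) * (1 * Real.exp 12) = 1 := by
      rw [one_mul, ← Real.exp_add]; norm_num
    calc min ((3:ℝ)^β / 2) (Real.exp (-12)) * ((1+t)^β * Real.exp t)
        ≤ Real.exp (-12) * (1 * Real.exp 12) := h2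
      _ = 1 := h3
      _ ≤ _ := term0_le_tsum ht
  · set K := ⌈2*t⌉₊ + 1 with hKdef
    have h2K : 2*t ≤ (K:ℝ) := by
      have := Nat.le_ceil (2*t)
      push_cast [hKdef]; push_cast at this; linarith
    have hKu : (K:ℝ) ≤ 2*t+2 := by
      have := Nat.ceil_lt_add_one (show (0:ℝ) ≤ 2*t by positivity)
      push_cast [hKdef]; push_cast at this; linarith
    -- tail of S is small
    have htailS : ∑' j : ℕ, t^(j+K) / (j+K).factorial ≤ Real.exp t / 2 := by
      have h1 : ∑' j : ℕ, t^(j+K) / (j+K).factorial ≤ 2 * (t^K / K.factorial) :=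
        S_tail_le ht h2K
      have h2 : t^K / K.factorial ≤ (2:ℝ)⁻¹ ^ K * Real.exp (2*t) := by
        have := S_single_chernoff ht (show (0:ℝ) < 2 by norm_num) K
        rwa [show (2:ℝ)*t = 2*t by ring] at this
      have h3 : (2:ℝ)⁻¹ ^ K ≤ Real.exp (-(2*t) * Real.log 2) := by
        have he : (2:ℝ)⁻¹ ^ K = Real.exp (-(K:ℝ) * Real.log 2) := by
          rw [← Real.exp_log (show (0:ℝ) < 2⁻¹ by norm_num), ← Real.exp_nat_mul]
          rw [Real.log_inv]
          ring_nf
        rw [he]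
        apply Real.exp_le_exp.mpr
        have hl2 : (0:ℝ) < Real.log 2 := Real.log_pos (by norm_num)
        nlinarith
      have h4 : Real.exp (2*t) * Real.exp (-(2*t) * Real.log 2) = Real.exp (2*(1-Real.log 2)*t) := by
        rw [← Real.exp_add]; ring_nf
      have h5 : 2*(1-Real.log 2)*t ≤ 5*t/8 := by
        have := le_log_two
        nlinarith
      have h6 : t^K / K.factorial ≤ Real.exp (5*t/8) := by
        calc t^K / K.factorial ≤ (2:ℝ)⁻¹ ^ K * Real.exp (2*t) := h2
          _ ≤ Real.exp (-(2*t) * Real.log 2) * Real.exp (2*t) :=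
              mul_le_mul_of_nonneg_right h3 (Real.exp_nonneg _)
          _ = Real.exp (2*(1-Real.log 2)*t) := by rw [mul_comm, h4]
          _ ≤ Real.exp (5*t/8) := Real.exp_le_exp.mpr h5
      have hfourexp : (4:ℝ) ≤ Real.exp (3*t/8) := by
        calc (4:ℝ) ≤ Real.exp (3/2) := four_le_exp
          _ ≤ Real.exp (3*t/8) := Real.exp_le_exp.mpr (by linarith)
      have h7 : 2 * Real.exp (5*t/8) ≤ Real.exp t / 2 := by
        have he : Real.exp t = Real.exp (5*t/8) * Real.exp (3*t/8) := by
          rw [← Real.exp_add]; ring_nf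
        rw [he]
        nlinarith [Real.exp_pos (5*t/8), Real.exp_pos (3*t/8)]
      linarith
    have hheadS : Real.exp t / 2 ≤ ∑ k ∈ range K, t^k / k.factorial := by
      have hsplitS := Summable.sum_add_tsum_nat_add (f := fun k : ℕ => t^k / k.factorial) K (summableS t)
      rw [← exp_tsum t] at htailS ⊢
      linarith
    have hKb : (3:ℝ)^β * (1+t)^β ≤ (1+(K:ℝ))^β := by
      have h0 : 1 + (K:ℝ) ≤ 3*(1+t) := by linarith
      calc (3:ℝ)^β * (1+t)^β = (3*(1+t))^β := (Real.mul_rpow (by norm_num) (by linarith)).symm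
        _ ≤ (1+(K:ℝ))^β := Real.rpow_le_rpow_of_nonpos (by positivity) h0 (le_of_lt hβ)
    have hheadf : (1+(K:ℝ))^β * ∑ k ∈ range K, t^k / k.factorial
        ≤ ∑ k ∈ range K, (1+k:ℝ)^β * t^k / k.factorial := by
      rw [mul_sum]
      apply sum_le_sum
      intro k hk
      have hkK : (k:ℝ) ≤ K := by exact_mod_cast le_of_lt (mem_range.mp hk)
      have hw : (1+(K:ℝ))^β ≤ (1+k:ℝ)^β :=
        Real.rpow_le_rpow_of_nonpos (by positivity) (by linarith) (le_of_lt hβ)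
      calc (1+(K:ℝ))^β * (t^k / k.factorial)
          ≤ (1+k:ℝ)^β * (t^k / k.factorial) :=
            mul_le_mul_of_nonneg_right hw (S_nonneg ht k)
        _ = (1+k:ℝ)^β * t^k / k.factorial := by ring
    calc min ((3:ℝ)^β / 2) (Real.exp (-12)) * ((1+t)^β * Real.exp t)
        ≤ (3:ℝ)^β / 2 * ((1+t)^β * Real.exp t) :=
          mul_le_mul_of_nonneg_right (min_le_left _ _) (by positivity)
      _ = ((3:ℝ)^β * (1+t)^β) * (Real.exp t / 2) := by ring
      _ ≤ (1+(K:ℝ))^β * (Real.exp t / 2) :=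
          mul_le_mul_of_nonneg_right hKb (by positivity)
      _ ≤ (1+(K:ℝ))^β * ∑ k ∈ range K, t^k / k.factorial :=
          mul_le_mul_of_nonneg_left hheadS (by positivity)
      _ ≤ ∑ k ∈ range K, (1+k:ℝ)^β * t^k / k.factorial := hheadf
      _ ≤ ∑' k : ℕ, (1+k:ℝ)^β * t^k / k.factorial :=
          Summable.sum_le_tsum (range K) (fun k _ => by positivity) hsum

lemma masterA (β : ℝ) :
    ∃ c > 0, ∃ C > 0, ∀ t : ℝ, 0 ≤ t →
      c * ((1+t)^β * Real.exp t) ≤ ∑' k : ℕ, (1+k:ℝ)^β * t^k / k.factorial ∧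
      ∑' k : ℕ, (1+k:ℝ)^β * t^k / k.factorial ≤ C * ((1+t)^β * Real.exp t) := by
  rcases le_or_gt 0 β with hβ | hβ
  · obtain ⟨c, hc, hcl⟩ := master_lower_pos hβ
    obtain ⟨C, hC, hCu⟩ := master_upper_pos hβ
    exact ⟨c, hc, C, hC, fun t ht => ⟨hcl t ht, hCu t ht⟩⟩
  · obtain ⟨c, hc, hcl⟩ := master_lower_neg hβ
    obtain ⟨C, hC, hCu⟩ := master_upper_neg hβ
    exact ⟨c, hc, C, hC, fun t ht => ⟨hcl t ht, hCu t ht⟩⟩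

end FockAux


namespace FockAux3
open Finset Real

lemma Gamma_prod (m : ℕ) : ∀ y : ℝ, 0 < y →
    Real.Gamma (y + m) = (∏ i ∈ range m, (y + i)) * Real.Gamma y := by
  induction m with
  | zero => intro y hy; simp
  | succ m ih =>
      intro y hy
      have h1 : y + (m+1:ℕ) = (y + m) + 1 := by push_cast; ring
      have h2 : (y + (m:ℝ)) ≠ 0 := by positivity
      rw [h1, Real.Gamma_add_one h2, ih y hy, prod_range_succ]
      ring

/-- log-convexity interpolation: Gautschi-type two-sided bound for `Γ(x)/Γ(x-σ)`, `σ ∈ [0,1]`. -/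
lemma Gamma_ratio_sigma {σ : ℝ} (hσ0 : 0 ≤ σ) (hσ1 : σ ≤ 1) {x : ℝ} (hx : 2 ≤ x) :
    (x/2)^σ ≤ Real.Gamma x / Real.Gamma (x - σ) ∧
      Real.Gamma x / Real.Gamma (x - σ) ≤ x^σ := by
  have hx0 : (0:ℝ) < x := by linarith
  have hxσ : (0:ℝ) < x - σ := by linarith
  have hx1 : (0:ℝ) < x - 1 := by linarith
  have hA : 0 < Real.Gamma (x - σ) := Real.Gamma_pos_of_pos hxσ
  have hX : 0 < Real.Gamma x := Real.Gamma_pos_of_pos hx0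
  have hcv := Real.convexOn_log_Gamma
  constructor
  · -- lower bound: Γ(x-σ) ≤ Γ(x) (x-1)^(-σ)
    have hmem1 : x - 1 ∈ Set.Ioi (0:ℝ) := hx1
    have hmem2 : x ∈ Set.Ioi (0:ℝ) := hx0
    have hcomb := hcv.2 hmem1 hmem2 hσ0 (by linarith : (0:ℝ) ≤ 1 - σ) (by ring)
    have harg : σ • (x-1) + (1-σ) • x = x - σ := by simp [smul_eq_mul]; ring
    rw [harg] at hcomb
    simp only [Function.comp_apply, smul_eq_mul] at hcomb
    -- hcomb : log Γ(x-σ) ≤ σ log Γ(x-1) + (1-σ) log Γ x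
    have hB : 0 < Real.Gamma (x-1) := Real.Gamma_pos_of_pos hx1
    have hΓ1 : Real.Gamma (x-1) = Real.Gamma x / (x-1) := by
      have h := Real.Gamma_add_one (ne_of_gt hx1)
      rw [show x - 1 + 1 = x by ring] at h
      field_simp [h]
      exact h.symm
    have hexp : Real.Gamma (x-σ) ≤ Real.Gamma (x-1)^σ * Real.Gamma x^(1-σ) := by
      have h1 : Real.Gamma (x-σ) = Real.exp (Real.log (Real.Gamma (x-σ))) :=
        (Real.exp_log hA).symm
      rw [h1]
      calc Real.exp (Real.log (Real.Gamma (x-σ)))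
          ≤ Real.exp (σ * Real.log (Real.Gamma (x-1)) + (1-σ) * Real.log (Real.Gamma x)) :=
            Real.exp_le_exp.mpr hcomb
        _ = Real.Gamma (x-1)^σ * Real.Gamma x^(1-σ) := by
            rw [Real.exp_add, Real.rpow_def_of_pos hB, Real.rpow_def_of_pos hX]
            ring_nf
    have key : Real.Gamma (x-σ) * (x-1)^σ ≤ Real.Gamma x := by
      have h2 : Real.Gamma (x-1)^σ = Real.Gamma x^σ * ((x-1)^σ)⁻¹ := by
        rw [hΓ1, Real.div_rpow (le_of_lt hX) (le_of_lt hx1)]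
        ring
      have h3 : Real.Gamma (x-1)^σ * Real.Gamma x^(1-σ)
          = Real.Gamma x * ((x-1)^σ)⁻¹ := by
        rw [h2]
        have : Real.Gamma x^σ * Real.Gamma x^(1-σ) = Real.Gamma x := by
          rw [← Real.rpow_add hX]; norm_num
        calc Real.Gamma x^σ * ((x-1)^σ)⁻¹ * Real.Gamma x^(1-σ)
            = (Real.Gamma x^σ * Real.Gamma x^(1-σ)) * ((x-1)^σ)⁻¹ := by ring
          _ = Real.Gamma x * ((x-1)^σ)⁻¹ := by rw [this]
      rw [h3] at hexp
      have hp : (0:ℝ) < (x-1)^σ := Real.rpow_pos_of_pos hx1 σ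
      calc Real.Gamma (x-σ) * (x-1)^σ
          ≤ (Real.Gamma x * ((x-1)^σ)⁻¹) * (x-1)^σ :=
            mul_le_mul_of_nonneg_right hexp (le_of_lt hp)
        _ = Real.Gamma x := by field_simp
    have h4 : (x/2)^σ ≤ (x-1)^σ :=
      Real.rpow_le_rpow (by positivity) (by linarith) hσ0
    rw [le_div_iff₀ hA]
    calc (x/2)^σ * Real.Gamma (x-σ) ≤ (x-1)^σ * Real.Gamma (x-σ) :=
          mul_le_mul_of_nonneg_right h4 (le_of_lt hA)
      _ ≤ Real.Gamma x := by linarith [key]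
  · -- upper bound: Γ(x) ≤ Γ(x-σ) (x-σ)^σ
    have hmem1 : x - σ ∈ Set.Ioi (0:ℝ) := hxσ
    have hmem2 : x + 1 - σ ∈ Set.Ioi (0:ℝ) := by simp; linarith
    have hcomb := hcv.2 hmem1 hmem2 (by linarith : (0:ℝ) ≤ 1 - σ) hσ0 (by ring)
    have harg : (1-σ) • (x-σ) + σ • (x+1-σ) = x := by simp [smul_eq_mul]; ring
    rw [harg] at hcomb
    simp only [Function.comp_apply, smul_eq_mul] at hcomb
    have hB : 0 < Real.Gamma (x+1-σ) := Real.Gamma_pos_of_pos (by linarith)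
    have hΓ1 : Real.Gamma (x+1-σ) = (x-σ) * Real.Gamma (x-σ) := by
      have h := Real.Gamma_add_one (ne_of_gt hxσ)
      rw [show x - σ + 1 = x + 1 - σ by ring] at h
      exact h
    have hexp : Real.Gamma x ≤ Real.Gamma (x-σ)^(1-σ) * Real.Gamma (x+1-σ)^σ := by
      have h1 : Real.Gamma x = Real.exp (Real.log (Real.Gamma x)) := (Real.exp_log hX).symm
      rw [h1]
      calc Real.exp (Real.log (Real.Gamma x))
          ≤ Real.exp ((1-σ) * Real.log (Real.Gamma (x-σ)) + σ * Real.log (Real.Gamma (x+1-σ))) :=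
            Real.exp_le_exp.mpr hcomb
        _ = Real.Gamma (x-σ)^(1-σ) * Real.Gamma (x+1-σ)^σ := by
            rw [Real.exp_add, Real.rpow_def_of_pos hA, Real.rpow_def_of_pos hB]
            ring_nf
    have key : Real.Gamma x ≤ Real.Gamma (x-σ) * (x-σ)^σ := by
      have h2 : Real.Gamma (x+1-σ)^σ = (x-σ)^σ * Real.Gamma (x-σ)^σ := by
        rw [hΓ1, Real.mul_rpow (le_of_lt hxσ) (le_of_lt hA)]
      have h3 : Real.Gamma (x-σ)^(1-σ) * Real.Gamma (x+1-σ)^σ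
          = Real.Gamma (x-σ) * (x-σ)^σ := by
        rw [h2]
        have : Real.Gamma (x-σ)^(1-σ) * Real.Gamma (x-σ)^σ = Real.Gamma (x-σ) := by
          rw [← Real.rpow_add hA]; norm_num
        calc Real.Gamma (x-σ)^(1-σ) * ((x-σ)^σ * Real.Gamma (x-σ)^σ)
            = (Real.Gamma (x-σ)^(1-σ) * Real.Gamma (x-σ)^σ) * (x-σ)^σ := by ring
          _ = Real.Gamma (x-σ) * (x-σ)^σ := by rw [this]
      rw [h3] at hexp
      exact hexp
    have h4 : (x-σ)^σ ≤ x^σ := Real.rpow_le_rpow (le_of_lt hxσ) (by linarith) hσ0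
    rw [div_le_iff₀ hA]
    calc Real.Gamma x ≤ Real.Gamma (x-σ) * (x-σ)^σ := key
      _ ≤ Real.Gamma (x-σ) * x^σ := mul_le_mul_of_nonneg_left h4 (le_of_lt hA)
      _ = x^σ * Real.Gamma (x-σ) := by ring

end FockAux3

namespace FockAux3
open Finset Real

lemma ratio_combine {x s σ τ F₁ F₂ a₁ b₁ a₂ b₂ : ℝ} (hx : 0 < x) (hs : σ + τ = s)
    (h1l : a₁ * x^σ ≤ F₁) (h1u : F₁ ≤ b₁ * x^σ)
    (h2l : a₂ * x^τ ≤ F₂) (h2u : F₂ ≤ b₂ * x^τ)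
    (ha₁ : 0 ≤ a₁) (ha₂ : 0 ≤ a₂) (hF₂ : 0 ≤ F₂) :
    a₁*a₂ * x^s ≤ F₁*F₂ ∧ F₁*F₂ ≤ b₁*b₂ * x^s := by
  have hxσ : (0:ℝ) < x^σ := Real.rpow_pos_of_pos hx σ
  have hxτ : (0:ℝ) < x^τ := Real.rpow_pos_of_pos hx τ
  have hF₁ : 0 ≤ F₁ := le_trans (by positivity) h1l
  have hb₁ : 0 ≤ b₁ * x^σ := le_trans hF₁ h1u
  have hrw : x^s = x^σ * x^τ := by rw [← hs, Real.rpow_add hx]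
  constructor
  · calc a₁*a₂*x^s = (a₁*x^σ)*(a₂*x^τ) := by rw [hrw]; ring
      _ ≤ F₁ * F₂ := mul_le_mul h1l h2l (by positivity) hF₁
  · calc F₁*F₂ ≤ (b₁*x^σ)*(b₂*x^τ) := mul_le_mul h1u h2u hF₂ hb₁
      _ = b₁*b₂*x^s := by rw [hrw]; ring

set_option maxHeartbeats 1000000 in
lemma Gamma_ratio (s : ℝ) :
    ∃ a, 0 < a ∧ ∃ b, 0 < b ∧ ∀ x : ℝ, 2*|s| + 4 ≤ x →
      a * x^s ≤ Real.Gamma x / Real.Gamma (x - s) ∧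
      Real.Gamma x / Real.Gamma (x - s) ≤ b * x^s := by
  set m : ℤ := ⌊s⌋ with hm
  set σ : ℝ := s - m with hσdef
  have hσ0 : 0 ≤ σ := by rw [hσdef]; linarith [Int.floor_le s]
  have hσ1 : σ ≤ 1 := by rw [hσdef]; linarith [Int.lt_floor_add_one s]
  rcases le_or_gt 0 m with hm0 | hm0
  · -- m ≥ 0, so s ≥ 0
    set p : ℕ := m.toNat with hp
    have hpm : (p:ℝ) = (m:ℝ) := by
      rw [hp]; exact_mod_cast congrArg (Int.cast : ℤ → ℝ) (Int.toNat_of_nonneg hm0)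
    have hps : (p:ℝ) ≤ s := by rw [hpm]; linarith [Int.floor_le s]
    have hsum : σ + (p:ℝ) = s := by rw [hσdef, hpm]; ring
    have hs0 : 0 ≤ s := le_trans (by positivity) hps
    refine ⟨((2:ℝ)^σ)⁻¹ * ((2:ℝ)⁻¹)^p, by positivity, 1, one_pos, fun x hx => ?_⟩
    have habs : |s| = s := abs_of_nonneg hs0
    rw [habs] at hx
    have hx0 : (0:ℝ) < x := by linarith
    have hx2 : (2:ℝ) ≤ x := by linarith
    have hxs : (0:ℝ) < x - s := by linarith
    have hxσ : (0:ℝ) < x - σ := by linarith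
    have hGxs : 0 < Real.Gamma (x-s) := Real.Gamma_pos_of_pos hxs
    have hGxσ : 0 < Real.Gamma (x-σ) := Real.Gamma_pos_of_pos hxσ
    have hGx : 0 < Real.Gamma x := Real.Gamma_pos_of_pos hx0
    -- product formula
    have hprod : Real.Gamma (x-σ) = (∏ i ∈ range p, (x - s + i)) * Real.Gamma (x-s) := by
      have h0 : x - s + p = x - σ := by rw [← hsum]; ring
      have := Gamma_prod p (x-s) hxs
      rwa [h0] at this
    have hF2 : Real.Gamma (x-σ) / Real.Gamma (x-s) = ∏ i ∈ range p, (x - s + i) := by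
      rw [hprod]; field_simp
    have hfl : ∀ i ∈ range p, x/2 ≤ x - s + i := by
      intro i hi
      have : (0:ℝ) ≤ i := Nat.cast_nonneg i
      linarith
    have hfu : ∀ i ∈ range p, x - s + i ≤ x := by
      intro i hi
      have hip : (i:ℝ) ≤ (p:ℝ) - 1 := by
        have := mem_range.mp hi
        have : (i:ℝ) + 1 ≤ p := by exact_mod_cast this
        linarith
      linarith [hps]
    have hprodl : (x/2)^p ≤ ∏ i ∈ range p, (x - s + i) := by
      calc (x/2)^p = ∏ i ∈ range p, (x/2 : ℝ) := by rw [prod_const, card_range]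
        _ ≤ ∏ i ∈ range p, (x - s + i) :=
            prod_le_prod (fun i _ => by positivity) hfl
    have hprodu : ∏ i ∈ range p, (x - s + i) ≤ x^p := by
      calc ∏ i ∈ range p, (x - s + i) ≤ ∏ i ∈ range p, x :=
            prod_le_prod (fun i hi => le_trans (by positivity) (hfl i hi)) hfu
        _ = x^p := by rw [prod_const, card_range]
    -- σ-part
    obtain ⟨hσl, hσu⟩ := Gamma_ratio_sigma hσ0 hσ1 hx2
    -- convert to rpow shape
    have hrpow_p : x ^ ((p:ℕ):ℝ) = x^p := Real.rpow_natCast x p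
    have h2l : ((2:ℝ)⁻¹)^p * x ^ ((p:ℕ):ℝ) ≤ Real.Gamma (x-σ) / Real.Gamma (x-s) := by
      rw [hF2, hrpow_p]
      calc ((2:ℝ)⁻¹)^p * x^p = (x/2)^p := by rw [div_pow, inv_pow]; ring
        _ ≤ _ := hprodl
    have h2u : Real.Gamma (x-σ) / Real.Gamma (x-s) ≤ 1 * x ^ ((p:ℕ):ℝ) := by
      rw [hF2, hrpow_p, one_mul]; exact hprodu
    have h1l : ((2:ℝ)^σ)⁻¹ * x^σ ≤ Real.Gamma x / Real.Gamma (x-σ) := by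
      calc ((2:ℝ)^σ)⁻¹ * x^σ = (x/2)^σ := by
            rw [Real.div_rpow (le_of_lt hx0) (by norm_num)]; ring
        _ ≤ _ := hσl
    have h1u : Real.Gamma x / Real.Gamma (x-σ) ≤ 1 * x^σ := by rw [one_mul]; exact hσu
    have hfact : Real.Gamma x / Real.Gamma (x-s)
        = (Real.Gamma x / Real.Gamma (x-σ)) * (Real.Gamma (x-σ) / Real.Gamma (x-s)) := by
      field_simp
    rw [hfact]
    have := ratio_combine hx0 hsum h1l h1u h2l h2u (by positivity) (by positivity)
      (by positivity)
    simpa using this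
  · -- m < 0
    set p : ℕ := (-m).toNat with hp
    have hpm : (p:ℝ) = -(m:ℝ) := by
      rw [hp]
      have : ((-m).toNat : ℤ) = -m := Int.toNat_of_nonneg (by linarith)
      exact_mod_cast congrArg (Int.cast : ℤ → ℝ) this
    have hsum : σ + (-(p:ℝ)) = s := by rw [hσdef, hpm]; ring
    have hpabs : (p:ℝ) ≤ |s| + 1 := by
      rw [hpm]
      have h1 : s - 1 ≤ (m:ℝ) := by linarith [Int.lt_floor_add_one s]
      have h2 : -s ≤ |s| := neg_le_abs s
      linarith
    refine ⟨((2:ℝ)^σ)⁻¹ * ((2:ℝ)^p)⁻¹, by positivity, 1 * (2:ℝ)^p,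
      by positivity, fun x hx => ?_⟩
    have habs : (0:ℝ) ≤ |s| := abs_nonneg s
    have hx0 : (0:ℝ) < x := by linarith
    have hx2 : (2:ℝ) ≤ x := by linarith
    have hxσ : (0:ℝ) < x - σ := by linarith
    have hxs : x - s = (x - σ) + p := by rw [← hsum]; ring
    have hxspos : (0:ℝ) < x - s := by
      rw [hxs]; positivity
    have hGxs : 0 < Real.Gamma (x-s) := Real.Gamma_pos_of_pos hxspos
    have hGxσ : 0 < Real.Gamma (x-σ) := Real.Gamma_pos_of_pos hxσ
    have hGx : 0 < Real.Gamma x := Real.Gamma_pos_of_pos hx0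
    have hprod : Real.Gamma (x-s) = (∏ i ∈ range p, (x - σ + i)) * Real.Gamma (x-σ) := by
      have := Gamma_prod p (x-σ) hxσ
      rw [hxs]; exact this
    have hfl : ∀ i ∈ range p, x/2 ≤ x - σ + i := by
      intro i hi
      have : (0:ℝ) ≤ i := Nat.cast_nonneg i
      linarith
    have hfu : ∀ i ∈ range p, x - σ + i ≤ 2*x := by
      intro i hi
      have hip : (i:ℝ) ≤ p := by
        have := mem_range.mp hi
        have : (i:ℝ) + 1 ≤ p := by exact_mod_cast this
        linarith
      have hpx : (p:ℝ) ≤ x := by linarith [hpabs]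
      linarith
    have hprodpos : (0:ℝ) < ∏ i ∈ range p, (x - σ + i) :=
      prod_pos (fun i hi => lt_of_lt_of_le (by positivity) (hfl i hi))
    have hprodl : (x/2)^p ≤ ∏ i ∈ range p, (x - σ + i) := by
      calc (x/2)^p = ∏ i ∈ range p, (x/2 : ℝ) := by rw [prod_const, card_range]
        _ ≤ _ := prod_le_prod (fun i _ => by positivity) hfl
    have hprodu : ∏ i ∈ range p, (x - σ + i) ≤ (2*x)^p := by
      calc ∏ i ∈ range p, (x - σ + i) ≤ ∏ i ∈ range p, (2*x) :=
            prod_le_prod (fun i hi => le_trans (by positivity) (hfl i hi)) hfu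
        _ = (2*x)^p := by rw [prod_const, card_range]
    have hF2 : Real.Gamma (x-σ) / Real.Gamma (x-s) = (∏ i ∈ range p, (x - σ + i))⁻¹ := by
      rw [hprod]; field_simp
    have hrpow_p : x ^ (-(p:ℝ)) = (x^p)⁻¹ := by
      rw [Real.rpow_neg (le_of_lt hx0), Real.rpow_natCast]
    have h2l : ((2:ℝ)^p)⁻¹ * x ^ (-(p:ℝ)) ≤ Real.Gamma (x-σ) / Real.Gamma (x-s) := by
      rw [hF2, hrpow_p]
      have h1 : ((2:ℝ)^p)⁻¹ * (x^p)⁻¹ = ((2*x)^p)⁻¹ := by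
        rw [mul_pow, mul_inv]
      rw [h1]
      exact inv_anti₀ hprodpos hprodu
    have h2u : Real.Gamma (x-σ) / Real.Gamma (x-s) ≤ (2:ℝ)^p * x ^ (-(p:ℝ)) := by
      rw [hF2, hrpow_p]
      have h1 : (2:ℝ)^p * (x^p)⁻¹ = ((x/2)^p)⁻¹ := by
        rw [div_pow, inv_div]
        field_simp
      rw [h1]
      exact inv_anti₀ (by positivity) hprodl
    obtain ⟨hσl, hσu⟩ := Gamma_ratio_sigma hσ0 hσ1 hx2
    have h1l : ((2:ℝ)^σ)⁻¹ * x^σ ≤ Real.Gamma x / Real.Gamma (x-σ) := by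
      calc ((2:ℝ)^σ)⁻¹ * x^σ = (x/2)^σ := by
            rw [Real.div_rpow (le_of_lt hx0) (by norm_num)]; ring
        _ ≤ _ := hσl
    have h1u : Real.Gamma x / Real.Gamma (x-σ) ≤ 1 * x^σ := by rw [one_mul]; exact hσu
    have hfact : Real.Gamma x / Real.Gamma (x-s)
        = (Real.Gamma x / Real.Gamma (x-σ)) * (Real.Gamma (x-σ) / Real.Gamma (x-s)) := by
      field_simp
    rw [hfact]
    exact ratio_combine hx0 hsum h1l h1u h2l h2u (by positivity) (by positivity)
      (le_of_lt (div_pos hGxσ hGxs))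

end FockAux3

namespace FockAux3
open Finset Real

lemma rpow_sandwich {u v M : ℝ} (hu : 0 < u) (huv : u ≤ v) (hM : v ≤ M * u) (hM1 : 1 ≤ M)
    (s : ℝ) : min 1 (M^s) * u^s ≤ v^s ∧ v^s ≤ max 1 (M^s) * u^s := by
  have hv : 0 < v := lt_of_lt_of_le hu huv
  have hus : (0:ℝ) < u^s := Real.rpow_pos_of_pos hu s
  rcases le_or_gt 0 s with h | h
  · constructor
    · calc min 1 (M^s) * u^s ≤ 1 * u^s :=
            mul_le_mul_of_nonneg_right (min_le_left _ _) hus.le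
        _ = u^s := one_mul _
        _ ≤ v^s := Real.rpow_le_rpow hu.le huv h
    · calc v^s ≤ (M*u)^s := Real.rpow_le_rpow hv.le hM h
        _ = M^s * u^s := Real.mul_rpow (by linarith) hu.le
        _ ≤ max 1 (M^s) * u^s := mul_le_mul_of_nonneg_right (le_max_right _ _) hus.le
  · constructor
    · calc min 1 (M^s) * u^s ≤ M^s * u^s :=
            mul_le_mul_of_nonneg_right (min_le_right _ _) hus.le
        _ = (M*u)^s := (Real.mul_rpow (by linarith) hu.le).symm
        _ ≤ v^s := Real.rpow_le_rpow_of_nonpos hv hM h.le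
    · calc v^s ≤ u^s := Real.rpow_le_rpow_of_nonpos hu huv h.le
        _ = 1 * u^s := (one_mul _).symm
        _ ≤ max 1 (M^s) * u^s := mul_le_mul_of_nonneg_right (le_max_left _ _) hus.le

lemma eventually_to_global {g h : ℕ → ℝ} (hg : ∀ k, 0 < g k) (hh : ∀ k, 0 < h k)
    (N : ℕ) :
    ∀ a b : ℝ, 0 < a → 0 < b → (∀ k, N ≤ k → a * h k ≤ g k ∧ g k ≤ b * h k) →
    ∃ a', 0 < a' ∧ ∃ b', 0 < b' ∧ ∀ k, a' * h k ≤ g k ∧ g k ≤ b' * h k := by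
  induction N with
  | zero =>
      intro a b ha hb hev
      exact ⟨a, ha, b, hb, fun k => hev k (Nat.zero_le k)⟩
  | succ N ih =>
      intro a b ha hb hev
      apply ih (min a (g N / h N)) (max b (g N / h N))
        (lt_min ha (div_pos (hg N) (hh N))) (lt_of_lt_of_le hb (le_max_left _ _))
      intro k hk
      rcases eq_or_lt_of_le hk with he | hlt
      · subst he
        constructor
        · calc min a (g N / h N) * h N ≤ (g N / h N) * h N :=
              mul_le_mul_of_nonneg_right (min_le_right _ _) (hh N).le
            _ = g N := div_mul_cancel₀ _ (ne_of_gt (hh N))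
        · calc g N = (g N / h N) * h N := (div_mul_cancel₀ _ (ne_of_gt (hh N))).symm
            _ ≤ max b (g N / h N) * h N :=
              mul_le_mul_of_nonneg_right (le_max_right _ _) (hh N).le
      · obtain ⟨h1, h2⟩ := hev k hlt
        constructor
        · calc min a (g N / h N) * h k ≤ a * h k :=
              mul_le_mul_of_nonneg_right (min_le_left _ _) (hh k).le
            _ ≤ g k := h1
        · calc g k ≤ b * h k := h2
            _ ≤ max b (g N / h N) * h k :=
              mul_le_mul_of_nonneg_right (le_max_left _ _) (hh k).le

set_option maxHeartbeats 1000000 in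
lemma coeff_bounds (n : ℕ) (hn : 1 ≤ n) (α : ℝ) :
    ∃ a, 0 < a ∧ ∃ b, 0 < b ∧ ∀ k : ℕ,
      a * (1+k:ℝ)^(α/2) ≤ (if (k:ℝ) ≤ α/2 then (1:ℝ)
          else Real.Gamma (n+k) / Real.Gamma (n+k-α/2)) ∧
      (if (k:ℝ) ≤ α/2 then (1:ℝ) else Real.Gamma (n+k) / Real.Gamma (n+k-α/2))
        ≤ b * (1+k:ℝ)^(α/2) := by
  obtain ⟨a₀, ha₀, b₀, hb₀, hR⟩ := Gamma_ratio (α/2)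
  have hn1 : (1:ℝ) ≤ n := by exact_mod_cast hn
  have hg : ∀ k : ℕ, 0 < (if (k:ℝ) ≤ α/2 then (1:ℝ)
      else Real.Gamma (n+k) / Real.Gamma (n+k-α/2)) := by
    intro k
    split_ifs with hk
    · exact one_pos
    · push_neg at hk
      have h1 : (0:ℝ) < n + k := by positivity
      have h2 : (0:ℝ) < n + k - α/2 := by
        have : α/2 < (k:ℝ) := hk
        linarith
      exact div_pos (Real.Gamma_pos_of_pos h1) (Real.Gamma_pos_of_pos h2)
  have hh : ∀ k : ℕ, (0:ℝ) < (1+k:ℝ)^(α/2) :=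
    fun k => Real.rpow_pos_of_pos (by positivity) _
  apply eventually_to_global hg hh ⌈2*|α/2| + 4⌉₊
    (a₀ * min 1 ((n:ℝ)^(α/2))) (b₀ * max 1 ((n:ℝ)^(α/2)))
    (by positivity)
    (lt_of_lt_of_le hb₀ (le_mul_of_one_le_right hb₀.le (le_max_left _ _)))
  intro k hk
  have hkc : 2*|α/2| + 4 ≤ (k:ℝ) := le_trans (Nat.le_ceil _) (by exact_mod_cast hk)
  have habs : α/2 ≤ |α/2| := le_abs_self _
  have habs0 : (0:ℝ) ≤ |α/2| := abs_nonneg _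
  have hkx : 2*|α/2| + 4 ≤ (n:ℝ) + k := by linarith
  have hnotif : ¬ ((k:ℝ) ≤ α/2) := by push_neg; linarith
  rw [if_neg hnotif]
  obtain ⟨hRl, hRu⟩ := hR ((n:ℝ)+k) hkx
  have hsand := rpow_sandwich (u := 1+(k:ℝ)) (v := (n:ℝ)+k) (M := (n:ℝ))
    (by positivity) (by linarith) (by nlinarith [Nat.cast_nonneg (α := ℝ) k]) hn1 (α/2)
  constructor
  · calc (a₀ * min 1 ((n:ℝ)^(α/2))) * (1+k:ℝ)^(α/2)
        = a₀ * (min 1 ((n:ℝ)^(α/2)) * (1+k:ℝ)^(α/2)) := by ring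
      _ ≤ a₀ * ((n:ℝ)+k)^(α/2) := mul_le_mul_of_nonneg_left hsand.1 ha₀.le
      _ ≤ Real.Gamma (n+k) / Real.Gamma (n+k-α/2) := hRl
  · calc Real.Gamma (n+k) / Real.Gamma (n+k-α/2)
        ≤ b₀ * ((n:ℝ)+k)^(α/2) := hRu
      _ ≤ b₀ * (max 1 ((n:ℝ)^(α/2)) * (1+k:ℝ)^(α/2)) :=
          mul_le_mul_of_nonneg_left hsand.2 hb₀.le
      _ = (b₀ * max 1 ((n:ℝ)^(α/2))) * (1+k:ℝ)^(α/2) := by ring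

end FockAux3

/-- The reproducing kernel of the weighted Fock space `F²_α`, given by its
series expansion: the coefficient of `(z·w̄)^k / k!` is `1` for the low-degree part
(`k ≤ α/2`, relevant when `α > 0`) and `Γ(n+k)/Γ(n+k-α/2)` for the tail, coming from
fractional integration `I^{-α/2}` of the classical Fock kernel `e^{z·w̄}`. -/
noncomputable def Kern (n : ℕ) (α : ℝ) (z w : EuclideanSpace ℂ (Fin n)) : ℂ :=
  ∑' k : ℕ,
    ((if (k : ℝ) ≤ α/2 then (1:ℝ) else Real.Gamma (n+k) / Real.Gamma (n+k-α/2)) : ℂ) *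
      (inner ℂ w z : ℂ)^k / (k.factorial : ℂ)

set_option maxHeartbeats 2000000 in
theorem stmt_8 (n : ℕ) (hn : 1 ≤ n) (α : ℝ) :
    ∃ c > 0, ∃ C > 0, ∀ z : EuclideanSpace ℂ (Fin n),
      c * (1 + ‖z‖) ^ α * Real.exp (‖z‖^2) ≤ ‖Kern n α z z‖ ∧
      ‖Kern n α z z‖ ≤ C * (1 + ‖z‖) ^ α * Real.exp (‖z‖^2) := by
  obtain ⟨a, ha, b, hb, hab⟩ := FockAux3.coeff_bounds n hn α
  obtain ⟨c₀, hc₀, C₀, hC₀, hM⟩ := FockAux.masterA (α/2)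
  have hmn0 : (0:ℝ) < min 1 ((2:ℝ)^(α/2)) :=
    lt_min one_pos (Real.rpow_pos_of_pos two_pos _)
  have hmx0 : (0:ℝ) < max 1 ((2:ℝ)^(α/2)) := lt_of_lt_of_le one_pos (le_max_left _ _)
  refine ⟨c₀ * a / max 1 ((2:ℝ)^(α/2)), by positivity,
          C₀ * b / min 1 ((2:ℝ)^(α/2)), by positivity, fun z => ?_⟩
  set r : ℝ := ‖z‖ with hr
  have hr0 : (0:ℝ) ≤ r := norm_nonneg z
  set t : ℝ := r^2 with htdef
  have ht0 : (0:ℝ) ≤ t := by positivity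
  have hsumW := FockAux.summable_rpow_w (α/2) ht0
  -- coefficient nonnegativity and summability
  have hck0 : ∀ k : ℕ, (0:ℝ) ≤ (if (k:ℝ) ≤ α/2 then (1:ℝ)
      else Real.Gamma (n+k) / Real.Gamma (n+k-α/2)) := by
    intro k
    have h0 : (0:ℝ) < a * (1+k:ℝ)^(α/2) := by positivity
    exact le_trans h0.le (hab k).1
  have hterm_nonneg : ∀ k : ℕ, (0:ℝ) ≤ (if (k:ℝ) ≤ α/2 then (1:ℝ)
      else Real.Gamma (n+k) / Real.Gamma (n+k-α/2)) * t^k / k.factorial := by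
    intro k
    have := hck0 k
    positivity
  have hterm_le : ∀ k : ℕ, (if (k:ℝ) ≤ α/2 then (1:ℝ)
      else Real.Gamma (n+k) / Real.Gamma (n+k-α/2)) * t^k / k.factorial
      ≤ b * ((1+k:ℝ)^(α/2) * t^k / k.factorial) := by
    intro k
    have h1 := (hab k).2
    have h2 : (0:ℝ) ≤ t^k / k.factorial := by positivity
    calc (if (k:ℝ) ≤ α/2 then (1:ℝ)
          else Real.Gamma (n+k) / Real.Gamma (n+k-α/2)) * t^k / k.factorial
        = (if (k:ℝ) ≤ α/2 then (1:ℝ)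
          else Real.Gamma (n+k) / Real.Gamma (n+k-α/2)) * (t^k / k.factorial) := by ring
      _ ≤ (b * (1+k:ℝ)^(α/2)) * (t^k / k.factorial) :=
          mul_le_mul_of_nonneg_right h1 h2
      _ = b * ((1+k:ℝ)^(α/2) * t^k / k.factorial) := by ring
  have hterm_ge : ∀ k : ℕ, a * ((1+k:ℝ)^(α/2) * t^k / k.factorial)
      ≤ (if (k:ℝ) ≤ α/2 then (1:ℝ)
        else Real.Gamma (n+k) / Real.Gamma (n+k-α/2)) * t^k / k.factorial := by
    intro k
    have h1 := (hab k).1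
    have h2 : (0:ℝ) ≤ t^k / k.factorial := by positivity
    calc a * ((1+k:ℝ)^(α/2) * t^k / k.factorial)
        = (a * (1+k:ℝ)^(α/2)) * (t^k / k.factorial) := by ring
      _ ≤ (if (k:ℝ) ≤ α/2 then (1:ℝ)
          else Real.Gamma (n+k) / Real.Gamma (n+k-α/2)) * (t^k / k.factorial) :=
          mul_le_mul_of_nonneg_right h1 h2
      _ = _ := by ring
  have hbsum : Summable fun k : ℕ => b * ((1+k:ℝ)^(α/2) * t^k / k.factorial) :=
    hsumW.mul_left b
  have hasum : Summable fun k : ℕ => a * ((1+k:ℝ)^(α/2) * t^k / k.factorial) :=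
    hsumW.mul_left a
  have hcksum : Summable (fun k : ℕ => (if (k:ℝ) ≤ α/2 then (1:ℝ)
      else Real.Gamma (n+k) / Real.Gamma (n+k-α/2)) * t^k / k.factorial) :=
    Summable.of_nonneg_of_le hterm_nonneg hterm_le hbsum
  -- identify kernel value
  have hKz : Kern n α z z = ((∑' k : ℕ, (if (k:ℝ) ≤ α/2 then (1:ℝ)
      else Real.Gamma (n+k) / Real.Gamma (n+k-α/2)) * t^k / k.factorial : ℝ) : ℂ) := by
    rw [Kern, Complex.ofReal_tsum]
    apply tsum_congr
    intro k
    have hinner : (inner ℂ z z : ℂ) = ((t : ℝ) : ℂ) := by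
      rw [inner_self_eq_norm_sq_to_K, htdef, hr]
      push_cast
      norm_cast
    rw [hinner]
    split_ifs <;> push_cast <;> ring
  have hS0 : (0:ℝ) ≤ ∑' k : ℕ, (if (k:ℝ) ≤ α/2 then (1:ℝ)
      else Real.Gamma (n+k) / Real.Gamma (n+k-α/2)) * t^k / k.factorial :=
    tsum_nonneg hterm_nonneg
  have hnorm : ‖Kern n α z z‖ = ∑' k : ℕ, (if (k:ℝ) ≤ α/2 then (1:ℝ)
      else Real.Gamma (n+k) / Real.Gamma (n+k-α/2)) * t^k / k.factorial := by
    rw [hKz, Complex.norm_real, Real.norm_eq_abs, abs_of_nonneg hS0]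
  -- series bounds
  have hupper : ∑' k : ℕ, (if (k:ℝ) ≤ α/2 then (1:ℝ)
      else Real.Gamma (n+k) / Real.Gamma (n+k-α/2)) * t^k / k.factorial
      ≤ b * ∑' k : ℕ, (1+k:ℝ)^(α/2) * t^k / k.factorial := by
    calc _ ≤ ∑' k : ℕ, b * ((1+k:ℝ)^(α/2) * t^k / k.factorial) :=
          Summable.tsum_le_tsum hterm_le hcksum hbsum
      _ = b * ∑' k : ℕ, (1+k:ℝ)^(α/2) * t^k / k.factorial := tsum_mul_left
  have hlower : a * ∑' k : ℕ, (1+k:ℝ)^(α/2) * t^k / k.factorial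
      ≤ ∑' k : ℕ, (if (k:ℝ) ≤ α/2 then (1:ℝ)
      else Real.Gamma (n+k) / Real.Gamma (n+k-α/2)) * t^k / k.factorial := by
    calc a * ∑' k : ℕ, (1+k:ℝ)^(α/2) * t^k / k.factorial
        = ∑' k : ℕ, a * ((1+k:ℝ)^(α/2) * t^k / k.factorial) := by
          rw [← tsum_mul_left]
      _ ≤ _ := Summable.tsum_le_tsum hterm_ge hasum hcksum
  obtain ⟨hMl, hMu⟩ := hM t ht0
  -- geometry: (1+r)^α = ((1+r)^2)^(α/2), sandwiched by (1+t)^(α/2)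
  have hvα : (1+r)^α = ((1+r)^2 : ℝ)^(α/2) := by
    have h1 : ((1+r:ℝ)^(2:ℕ) : ℝ) = (1+r:ℝ)^((2:ℕ):ℝ) := (Real.rpow_natCast _ 2).symm
    rw [h1, ← Real.rpow_mul (by linarith)]
    congr 1
    push_cast
    ring
  have hsand := FockAux3.rpow_sandwich (u := 1+t) (v := (1+r)^2) (M := 2)
    (by linarith) (by nlinarith) (by nlinarith [sq_nonneg (1-r)]) one_le_two (α/2)
  have hsand1 : min 1 ((2:ℝ)^(α/2)) * (1+t)^(α/2) ≤ (1+r)^α := by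
    rw [hvα]; exact hsand.1
  have hsand2 : (1+r)^α ≤ max 1 ((2:ℝ)^(α/2)) * (1+t)^(α/2) := by
    rw [hvα]; exact hsand.2
  rw [hnorm]
  constructor
  · -- lower bound
    have step1 : c₀ * a / max 1 ((2:ℝ)^(α/2)) * (1+r)^α * Real.exp t
        ≤ c₀ * a / max 1 ((2:ℝ)^(α/2)) * (max 1 ((2:ℝ)^(α/2)) * (1+t)^(α/2)) * Real.exp t := by
      apply mul_le_mul_of_nonneg_right _ (Real.exp_nonneg t)
      exact mul_le_mul_of_nonneg_left hsand2 (by positivity)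
    have step2 : c₀ * a / max 1 ((2:ℝ)^(α/2)) * (max 1 ((2:ℝ)^(α/2)) * (1+t)^(α/2)) * Real.exp t
        = a * (c₀ * ((1+t)^(α/2) * Real.exp t)) := by
      field_simp
    have step3 : a * (c₀ * ((1+t)^(α/2) * Real.exp t))
        ≤ a * ∑' k : ℕ, (1+k:ℝ)^(α/2) * t^k / k.factorial :=
      mul_le_mul_of_nonneg_left hMl ha.le
    calc c₀ * a / max 1 ((2:ℝ)^(α/2)) * (1+r)^α * Real.exp t
        ≤ c₀ * a / max 1 ((2:ℝ)^(α/2)) * (max 1 ((2:ℝ)^(α/2)) * (1+t)^(α/2)) * Real.exp t := step1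
      _ = a * (c₀ * ((1+t)^(α/2) * Real.exp t)) := step2
      _ ≤ a * ∑' k : ℕ, (1+k:ℝ)^(α/2) * t^k / k.factorial := step3
      _ ≤ _ := hlower
  · -- upper bound
    have step1 : b * ∑' k : ℕ, (1+k:ℝ)^(α/2) * t^k / k.factorial
        ≤ b * (C₀ * ((1+t)^(α/2) * Real.exp t)) :=
      mul_le_mul_of_nonneg_left hMu hb.le
    have step2 : b * (C₀ * ((1+t)^(α/2) * Real.exp t))
        = C₀ * b / min 1 ((2:ℝ)^(α/2)) * (min 1 ((2:ℝ)^(α/2)) * (1+t)^(α/2)) * Real.exp t := by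
      field_simp
    have step3 : C₀ * b / min 1 ((2:ℝ)^(α/2)) * (min 1 ((2:ℝ)^(α/2)) * (1+t)^(α/2)) * Real.exp t
        ≤ C₀ * b / min 1 ((2:ℝ)^(α/2)) * (1+r)^α * Real.exp t := by
      apply mul_le_mul_of_nonneg_right _ (Real.exp_nonneg t)
      exact mul_le_mul_of_nonneg_left hsand1 (by positivity)
    calc ∑' k : ℕ, (if (k:ℝ) ≤ α/2 then (1:ℝ)
          else Real.Gamma (n+k) / Real.Gamma (n+k-α/2)) * t^k / k.factorial
        ≤ b * ∑' k : ℕ, (1+k:ℝ)^(α/2) * t^k / k.factorial := hupper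
      _ ≤ b * (C₀ * ((1+t)^(α/2) * Real.exp t)) := step1
      _ = C₀ * b / min 1 ((2:ℝ)^(α/2)) * (min 1 ((2:ℝ)^(α/2)) * (1+t)^(α/2)) * Real.exp t := step2
      _ ≤ C₀ * b / min 1 ((2:ℝ)^(α/2)) * (1+r)^α * Real.exp t := step3
end

section
/- Let 0 < p ≤ 1, and let {b_j} ⊂ ℂⁿ with pairwise distances |b_i - b_j| > 2R for i ≠ j, where R > r > 0. Then Σ_{i≠j} (∫_{ℂⁿ} e^{-(1/8)|z-b_i|² - (1/8)|z-b_j|²} dν(z))^p ≤ C e^{-pR²/16} Σ_l μ(B(b_l,r))^p (Σ_j e^{-(p/64)|b_l - b_j|²})², for ν = Σ_l μ·χ_{B(b_l,r)} and any nonnegative Borel measure μ, where C depends only on p, n, r. -/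
open MeasureTheory
open scoped ENNReal NNReal

noncomputable instance (n : ℕ) : MeasurableSpace (EuclideanSpace ℂ (Fin n)) := borel _
instance (n : ℕ) : BorelSpace (EuclideanSpace ℂ (Fin n)) := ⟨rfl⟩

lemma aux_tsum_rpow {f : ℕ → ℝ≥0∞} {p : ℝ} (hp0 : 0 < p) (hp1 : p ≤ 1) :
    (∑' l, f l) ^ p ≤ ∑' l, f l ^ p := by
  classical
  have hfin : ∀ s : Finset ℕ, (∑ l ∈ s, f l) ^ p ≤ ∑' l, f l ^ p := by
    intro s
    have h1 : (∑ l ∈ s, f l) ^ p ≤ ∑ l ∈ s, f l ^ p := by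
      induction s using Finset.induction with
      | empty => simp [ENNReal.zero_rpow_of_pos hp0]
      | @insert a s h ih =>
        rw [Finset.sum_insert h, Finset.sum_insert h]
        exact le_trans (ENNReal.rpow_add_le_add_rpow _ _ hp0.le hp1) (by gcongr)
    exact h1.trans (ENNReal.sum_le_tsum s)
  have hmap : (⨆ s : Finset ℕ, ∑ l ∈ s, f l) ^ p
      = ⨆ s : Finset ℕ, (∑ l ∈ s, f l) ^ p :=
    Monotone.map_iSup_of_continuousAt (f := fun x : ℝ≥0∞ => x ^ p)
      ENNReal.continuous_rpow_const.continuousAt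
      (ENNReal.monotone_rpow_of_nonneg hp0.le)
      (by simp [ENNReal.zero_rpow_of_pos hp0])
  rw [ENNReal.tsum_eq_iSup_sum, hmap]
  exact iSup_le hfin

theorem stmt_19 (n : ℕ) (p r : ℝ) (hp0 : 0 < p) (hp1 : p ≤ 1) (hr : 0 < r) :
    ∃ C > 0, ∀ R : ℝ, r < R →
      ∀ b : ℕ → EuclideanSpace ℂ (Fin n),
        (∀ i j, i ≠ j → 2 * R < ‖b i - b j‖) →
        ∀ μ : Measure (EuclideanSpace ℂ (Fin n)),
          (∑' ij : ℕ × ℕ,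
              if ij.1 ≠ ij.2 then
                (∫⁻ z, ENNReal.ofReal
                    (Real.exp (-(1/8) * ‖z - b ij.1‖^2 - (1/8) * ‖z - b ij.2‖^2))
                  ∂(Measure.sum fun l : ℕ => μ.restrict (Metric.ball (b l) r))) ^ p
              else 0) ≤
            ENNReal.ofReal (C * Real.exp (-p * R^2 / 16)) *
              ∑' l : ℕ, μ (Metric.ball (b l) r) ^ p *
                (∑' j : ℕ, ENNReal.ofReal (Real.exp (-(p/64) * ‖b l - b j‖^2))) ^ 2 := by
  refine ⟨1, one_pos, ?_⟩
  intro R hR b hsep μ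
  have hRpos : 0 < R := hr.trans hR
  set A : ℕ → ℝ≥0∞ := fun l => μ (Metric.ball (b l) r) with hA
  set c : ℕ → ℕ → ℝ≥0∞ :=
    fun l i => ENNReal.ofReal (Real.exp (-(p/64) * ‖b l - b i‖^2)) with hc
  -- distance lower bound on the ball
  have hdist : ∀ l i, ∀ z ∈ Metric.ball (b l) r, (1/2) * ‖b l - b i‖ ≤ ‖z - b i‖ := by
    intro l i z hz
    rcases eq_or_ne l i with rfl | hne
    · simp [norm_nonneg]
    · have h1 : 2 * R < ‖b l - b i‖ := hsep l i hne
      have h2 : dist (b l) (b i) ≤ dist (b l) z + dist z (b i) := dist_triangle _ _ _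
      rw [dist_eq_norm, dist_eq_norm, dist_eq_norm] at h2
      have h3 : ‖b l - z‖ < r := by
        rw [norm_sub_rev]
        exact dist_eq_norm z (b l) ▸ Metric.mem_ball.mp hz
      linarith
  -- pointwise exponential bound on the ball
  have hpt : ∀ i j, i ≠ j → ∀ l, ∀ z ∈ Metric.ball (b l) r,
      Real.exp (-(1/8) * ‖z - b i‖^2 - (1/8) * ‖z - b j‖^2) ≤
        Real.exp (-(R^2)/16 - (1/64) * ‖b l - b i‖^2 - (1/64) * ‖b l - b j‖^2) := by
    intro i j hij l z hz
    apply Real.exp_le_exp.mpr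
    set u := ‖z - b i‖
    set v := ‖z - b j‖
    set di := ‖b l - b i‖
    set dj := ‖b l - b j‖
    have hu0 : 0 ≤ u := norm_nonneg _
    have hv0 : 0 ≤ v := norm_nonneg _
    have hdi0 : 0 ≤ di := norm_nonneg _
    have hdj0 : 0 ≤ dj := norm_nonneg _
    have hui : (1/2) * di ≤ u := hdist l i z hz
    have hvj : (1/2) * dj ≤ v := hdist l j z hz
    have htri : ‖b i - b j‖ ≤ u + v := by
      have := dist_triangle (b i) z (b j)
      rw [dist_eq_norm, dist_eq_norm, dist_eq_norm] at this
      rw [norm_sub_rev (b i) z] at this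
      exact this
    have huv : 2 * R < u + v := lt_of_lt_of_le (hsep i j hij) htri
    have hRsq : 2 * R^2 ≤ u^2 + v^2 := by nlinarith [sq_nonneg (u - v), sq_nonneg (u + v)]
    have hu2 : di^2 ≤ 4 * u^2 := by nlinarith
    have hv2 : dj^2 ≤ 4 * v^2 := by nlinarith
    nlinarith [sq_nonneg R]
  -- per-pair integral bound
  set S : ℕ → ℝ≥0∞ := fun l => ∑' j, c l j with hS
  have key : ∀ i j, i ≠ j →
      (∫⁻ z, ENNReal.ofReal
          (Real.exp (-(1/8) * ‖z - b i‖^2 - (1/8) * ‖z - b j‖^2))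
        ∂(Measure.sum fun l : ℕ => μ.restrict (Metric.ball (b l) r))) ^ p ≤
      ENNReal.ofReal (Real.exp (-p * R^2 / 16)) * ∑' l, A l ^ p * (c l i * c l j) := by
    intro i j hij
    have hint : (∫⁻ z, ENNReal.ofReal
          (Real.exp (-(1/8) * ‖z - b i‖^2 - (1/8) * ‖z - b j‖^2))
        ∂(Measure.sum fun l : ℕ => μ.restrict (Metric.ball (b l) r))) ≤
        ∑' l, ENNReal.ofReal
          (Real.exp (-(R^2)/16 - (1/64) * ‖b l - b i‖^2 - (1/64) * ‖b l - b j‖^2)) * A l := by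
      rw [lintegral_sum_measure]
      refine ENNReal.tsum_le_tsum fun l => ?_
      calc ∫⁻ z in Metric.ball (b l) r,
              ENNReal.ofReal (Real.exp (-(1/8) * ‖z - b i‖^2 - (1/8) * ‖z - b j‖^2)) ∂μ
          ≤ ∫⁻ _ in Metric.ball (b l) r,
              ENNReal.ofReal (Real.exp (-(R^2)/16 - (1/64) * ‖b l - b i‖^2
                - (1/64) * ‖b l - b j‖^2)) ∂μ := by
            refine setLIntegral_mono' Metric.isOpen_ball.measurableSet fun z hz => ?_
            exact ENNReal.ofReal_le_ofReal (hpt i j hij l z hz)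
        _ = ENNReal.ofReal (Real.exp (-(R^2)/16 - (1/64) * ‖b l - b i‖^2
              - (1/64) * ‖b l - b j‖^2)) * A l := setLIntegral_const _ _
    calc (∫⁻ z, ENNReal.ofReal
            (Real.exp (-(1/8) * ‖z - b i‖^2 - (1/8) * ‖z - b j‖^2))
          ∂(Measure.sum fun l : ℕ => μ.restrict (Metric.ball (b l) r))) ^ p
        ≤ (∑' l, ENNReal.ofReal
            (Real.exp (-(R^2)/16 - (1/64) * ‖b l - b i‖^2 - (1/64) * ‖b l - b j‖^2))
            * A l) ^ p := ENNReal.rpow_le_rpow hint hp0.le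
      _ ≤ ∑' l, (ENNReal.ofReal
            (Real.exp (-(R^2)/16 - (1/64) * ‖b l - b i‖^2 - (1/64) * ‖b l - b j‖^2))
            * A l) ^ p := aux_tsum_rpow hp0 hp1
      _ = ∑' l, ENNReal.ofReal (Real.exp (-p * R^2 / 16)) * (A l ^ p * (c l i * c l j)) := by
          refine tsum_congr fun l => ?_
          rw [ENNReal.mul_rpow_of_nonneg _ _ hp0.le,
            ENNReal.ofReal_rpow_of_pos (Real.exp_pos _),
            ← Real.exp_mul]
          have hexp : (-(R^2)/16 - (1/64) * ‖b l - b i‖^2 - (1/64) * ‖b l - b j‖^2) * p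
              = (-p * R^2 / 16) + ((-(p/64) * ‖b l - b i‖^2) + (-(p/64) * ‖b l - b j‖^2)) := by
            ring
          rw [hexp, Real.exp_add, Real.exp_add,
            ENNReal.ofReal_mul (Real.exp_pos _).le, ENNReal.ofReal_mul (Real.exp_pos _).le]
          simp only [hc]
          ring
      _ = ENNReal.ofReal (Real.exp (-p * R^2 / 16)) * ∑' l, A l ^ p * (c l i * c l j) :=
          ENNReal.tsum_mul_left
  -- assemble the double sum
  calc (∑' ij : ℕ × ℕ,
          if ij.1 ≠ ij.2 then
            (∫⁻ z, ENNReal.ofReal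
                (Real.exp (-(1/8) * ‖z - b ij.1‖^2 - (1/8) * ‖z - b ij.2‖^2))
              ∂(Measure.sum fun l : ℕ => μ.restrict (Metric.ball (b l) r))) ^ p
          else 0)
      ≤ ∑' ij : ℕ × ℕ, ENNReal.ofReal (Real.exp (-p * R^2 / 16))
          * ∑' l, A l ^ p * (c l ij.1 * c l ij.2) := by
        refine ENNReal.tsum_le_tsum fun ij => ?_
        by_cases h : ij.1 ≠ ij.2
        · rw [if_pos h]; exact key ij.1 ij.2 h
        · rw [if_neg h]; exact zero_le
    _ = ENNReal.ofReal (Real.exp (-p * R^2 / 16))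
          * ∑' ij : ℕ × ℕ, ∑' l, A l ^ p * (c l ij.1 * c l ij.2) := ENNReal.tsum_mul_left
    _ = ENNReal.ofReal (Real.exp (-p * R^2 / 16)) * ∑' l, A l ^ p * S l ^ 2 := by
        congr 1
        rw [ENNReal.tsum_prod']
        have h1 : ∀ i : ℕ, (∑' j : ℕ, ∑' l, A l ^ p * (c l i * c l j))
            = ∑' l, ∑' j : ℕ, A l ^ p * (c l i * c l j) := fun i => ENNReal.tsum_comm
        simp_rw [h1]
        rw [ENNReal.tsum_comm]
        refine tsum_congr fun l => ?_
        have h2 : ∀ i : ℕ, (∑' j : ℕ, A l ^ p * (c l i * c l j))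
            = A l ^ p * c l i * S l := by
          intro i
          simp_rw [← mul_assoc]
          exact ENNReal.tsum_mul_left
        simp_rw [h2]
        rw [ENNReal.tsum_mul_right, ENNReal.tsum_mul_left]
        rw [sq]
        ring
    _ ≤ ENNReal.ofReal (1 * Real.exp (-p * R^2 / 16)) * ∑' l, A l ^ p * S l ^ 2 := by
        rw [one_mul]
end
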